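/- arXiv:1204.5268 — 10 statements merged into one kernel-verified Lean document; each statement's English description precedes it below -/
import Mathlib

section
/- For every finite set C of unit vectors in ℝ^n (n ≥ 2) and every k ≥ 1, the sum over all ordered pairs (x,y) ∈ C × C of G_k^{(n)}(⟨x,y⟩) is nonnegative, where G_k^{(n)} is the degree-k Gegenbauer polynomial normalized by G_k^{(n)}(1)=1. -/
open RealInnerProductSpace

/-- The Gegenbauer polynomials `G_k^{(n)}`, normalized so that `G_k^{(n)}(1) = 1`. -/
noncomputable def gegenbauer (n : ℕ) : ℕ → ℝ → ℝ
  | 0 => fun _ => 1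
  | 1 => fun t => t
  | (k + 2) => fun t =>
      ((2 * ((k : ℝ) + 2) + (n : ℝ) - 4) * t * gegenbauer n (k + 1) t
        - (((k : ℝ) + 2) - 1) * gegenbauer n k t) / (((k : ℝ) + 2) + (n : ℝ) - 3)

set_option linter.unusedSectionVars false
set_option linter.unusedVariables false
set_option maxHeartbeats 1000000
section SchProof

open MvPolynomial

namespace Sch

variable {n : ℕ}

/-- weight `α! = ∏ αᵢ!` -/
noncomputable def w (α : Fin n →₀ ℕ) : ℝ := ∏ i, (Nat.factorial (α i) : ℝ)

lemma w_pos (α : Fin n →₀ ℕ) : 0 < w α :=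
  Finset.prod_pos fun i _ => by positivity

lemma w_zero : w (0 : Fin n →₀ ℕ) = 1 := by simp [w]

lemma w_succ (α : Fin n →₀ ℕ) (i : Fin n) (h : α i ≠ 0) :
    w α = (α i : ℝ) * w (α - Finsupp.single i 1) := by
  have h1 : ((α - Finsupp.single i 1 : Fin n →₀ ℕ)) i = α i - 1 := by
    rw [Finsupp.tsub_apply, Finsupp.single_apply]; simp
  have h2 : ∀ j, j ≠ i → ((α - Finsupp.single i 1 : Fin n →₀ ℕ)) j = α j := by
    intro j hj
    rw [Finsupp.tsub_apply, Finsupp.single_apply, if_neg hj.symm]; simp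
  unfold w
  rw [← Finset.mul_prod_erase Finset.univ _ (Finset.mem_univ i)]
  conv_rhs => rw [← Finset.mul_prod_erase Finset.univ _ (Finset.mem_univ i)]
  have h3 : ∏ x ∈ Finset.univ.erase i,
      ((Nat.factorial ((α - Finsupp.single i 1 : Fin n →₀ ℕ) x)) : ℝ)
      = ∏ x ∈ Finset.univ.erase i, ((Nat.factorial (α x)) : ℝ) :=
    Finset.prod_congr rfl fun j hj => by rw [h2 j (Finset.mem_erase.mp hj).1]
  rw [h1, h3]
  rw [← mul_assoc]
  congr 1
  obtain ⟨m, hm⟩ := Nat.exists_eq_succ_of_ne_zero h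
  rw [hm]
  push_cast [Nat.factorial_succ]
  ring

/-- Fischer pairing -/
noncomputable def F (p q : MvPolynomial (Fin n) ℝ) : ℝ :=
  ∑ α ∈ q.support, w α * p.coeff α * q.coeff α

lemma F_eq_sum {p q : MvPolynomial (Fin n) ℝ} {s : Finset (Fin n →₀ ℕ)}
    (hs : q.support ⊆ s) : F p q = ∑ α ∈ s, w α * p.coeff α * q.coeff α := by
  refine Finset.sum_subset hs fun α _ hα => ?_
  have : q.coeff α = 0 := by
    by_contra h; exact hα (MvPolynomial.mem_support_iff.mpr h)
  simp [this]

lemma F_comm (p q : MvPolynomial (Fin n) ℝ) : F p q = F q p := by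
  rw [F_eq_sum (s := p.support ∪ q.support) Finset.subset_union_right,
      F_eq_sum (s := p.support ∪ q.support) Finset.subset_union_left]
  exact Finset.sum_congr rfl fun α _ => by ring

lemma F_add_right (p q q' : MvPolynomial (Fin n) ℝ) :
    F p (q + q') = F p q + F p q' := by
  have hu : (q + q').support ⊆ q.support ∪ q'.support := support_add
  rw [F_eq_sum (s := q.support ∪ q'.support) hu,
      F_eq_sum (s := q.support ∪ q'.support) Finset.subset_union_left,
      F_eq_sum (s := q.support ∪ q'.support) Finset.subset_union_right,
      ← Finset.sum_add_distrib]
  exact Finset.sum_congr rfl fun α _ => by rw [coeff_add]; ring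

lemma F_add_left (p p' q : MvPolynomial (Fin n) ℝ) :
    F (p + p') q = F p q + F p' q := by
  rw [F_comm, F_add_right, F_comm q p, F_comm q p']

lemma F_zero_right (p : MvPolynomial (Fin n) ℝ) : F p 0 = 0 := by
  simp [F]

lemma F_zero_left (q : MvPolynomial (Fin n) ℝ) : F 0 q = 0 := by
  simp [F]

lemma F_C_mul_right (a : ℝ) (p q : MvPolynomial (Fin n) ℝ) :
    F p (C a * q) = a * F p q := by
  have hs : (C a * q).support ⊆ q.support := by
    intro α hα
    rw [MvPolynomial.mem_support_iff] at hα ⊢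
    intro h
    exact hα (by rw [coeff_C_mul, h, mul_zero])
  rw [F_eq_sum (s := q.support) hs, F, Finset.mul_sum]
  exact Finset.sum_congr rfl fun α _ => by rw [coeff_C_mul]; ring

lemma F_C_mul_left (a : ℝ) (p q : MvPolynomial (Fin n) ℝ) :
    F (C a * p) q = a * F p q := by
  rw [F_comm, F_C_mul_right, F_comm]

lemma F_self_nonneg (p : MvPolynomial (Fin n) ℝ) : 0 ≤ F p p :=
  Finset.sum_nonneg fun α _ => by
    have := (w_pos α).le
    have h : w α * p.coeff α * p.coeff α = w α * (p.coeff α)^2 := by ring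
    rw [h]; positivity

lemma F_sum_left {ι : Type*} (s : Finset ι) (f : ι → MvPolynomial (Fin n) ℝ)
    (q : MvPolynomial (Fin n) ℝ) : F (∑ i ∈ s, f i) q = ∑ i ∈ s, F (f i) q := by
  induction s using Finset.cons_induction with
  | empty => simp [F_zero_left]
  | cons a s ha ih => rw [Finset.sum_cons, Finset.sum_cons, F_add_left, ih]

lemma F_sum_right {ι : Type*} (s : Finset ι) (p : MvPolynomial (Fin n) ℝ)
    (f : ι → MvPolynomial (Fin n) ℝ) : F p (∑ i ∈ s, f i) = ∑ i ∈ s, F p (f i) := by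
  rw [F_comm, F_sum_left]; exact Finset.sum_congr rfl fun i _ => F_comm _ _

lemma F_monomial_right (p : MvPolynomial (Fin n) ℝ) (γ : Fin n →₀ ℕ) (c : ℝ) :
    F p (monomial γ c) = w γ * p.coeff γ * c := by
  rcases eq_or_ne c 0 with rfl | hc
  · simp [F]
  · rw [F_eq_sum (s := {γ}) (by rw [support_monomial]; simp [hc])]
    simp [coeff_monomial]

lemma coeff_pderiv (i : Fin n) (p : MvPolynomial (Fin n) ℝ) (α : Fin n →₀ ℕ) :
    coeff α (pderiv i p) = ((α i : ℝ) + 1) * coeff (α + Finsupp.single i 1) p := by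
  induction p using MvPolynomial.induction_on' with
  | monomial s a =>
    rw [pderiv_monomial, coeff_monomial, coeff_monomial]
    rcases eq_or_ne (s i) 0 with hs | hs
    · have : s ≠ α + Finsupp.single i 1 := by
        intro h
        apply absurd hs
        rw [h]; simp
      rw [if_neg this]
      rcases eq_or_ne (s - Finsupp.single i 1) α with he | he
      · rw [if_pos he]; simp [hs]
      · rw [if_neg he]; ring
    · have key : s - Finsupp.single i 1 = α ↔ s = α + Finsupp.single i 1 := by
        constructor
        · intro h
          rw [← h]
          ext j
          rcases eq_or_ne j i with rfl | hj
          · rw [Finsupp.add_apply, Finsupp.tsub_apply, Finsupp.single_apply, if_pos rfl]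
            omega
          · rw [Finsupp.add_apply, Finsupp.tsub_apply, Finsupp.single_apply, if_neg
              (by exact fun hh => hj hh.symm)]
            simp
        · intro h
          rw [h]
          ext j
          rcases eq_or_ne j i with rfl | hj
          · rw [Finsupp.tsub_apply, Finsupp.add_apply, Finsupp.single_apply, if_pos rfl]
            omega
          · rw [Finsupp.tsub_apply, Finsupp.add_apply, Finsupp.single_apply, if_neg
              (by exact fun hh => hj hh.symm)]
            simp
      rcases eq_or_ne (s - Finsupp.single i 1) α with he | he
      · rw [if_pos he, if_pos (key.mp he)]
        have : s i = α i + 1 := by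
          rw [key.mp he]; simp
        rw [this]; push_cast; ring
      · rw [if_neg he, if_neg (fun hh => he (key.mpr hh))]; ring
  | add p q hp hq =>
    rw [map_add, coeff_add, coeff_add, hp, hq]; ring

lemma weight_one_eq_sum (α : Fin n →₀ ℕ) :
    (Finsupp.weight (1 : Fin n → ℕ)) α = ∑ i, α i := by
  rw [show (Finsupp.weight (1 : Fin n → ℕ)) α = Finsupp.degree α from
    (DFunLike.congr_fun (Finsupp.degree_eq_weight_one (R := ℕ) (σ := Fin n)) α).symm,
    Finsupp.degree_apply]
  exact Finset.sum_subset (Finset.subset_univ _)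
    (fun x _ hx => by simpa using Finsupp.notMem_support_iff.mp hx)

lemma isHomogeneous_pderiv {i : Fin n} {p : MvPolynomial (Fin n) ℝ} {k : ℕ}
    (hp : p.IsHomogeneous (k + 1)) : (pderiv i p).IsHomogeneous k := by
  intro α hα
  rw [coeff_pderiv] at hα
  have h2 : coeff (α + Finsupp.single i 1) p ≠ 0 := by
    intro h; rw [h, mul_zero] at hα; exact hα rfl
  have h3 := hp h2
  rw [weight_one_eq_sum] at h3 ⊢
  simp only [Finsupp.add_apply] at h3
  rw [Finset.sum_add_distrib] at h3
  have hsingle : ∑ j, Finsupp.single i 1 j = 1 := by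
    simp [Finsupp.single_apply]
  omega

/-- Euler's identity -/
lemma euler {p : MvPolynomial (Fin n) ℝ} {k : ℕ} (hp : p.IsHomogeneous k) :
    ∑ i, X i * pderiv i p = C (k : ℝ) * p := by
  apply MvPolynomial.ext
  intro α
  rw [coeff_sum, coeff_C_mul]
  have hterm : ∀ i, coeff α (X i * pderiv i p) = (α i : ℝ) * coeff α p := by
    intro i
    rw [coeff_X_mul']
    by_cases hi : i ∈ α.support
    · rw [if_pos hi, coeff_pderiv]
      have : α - Finsupp.single i 1 + Finsupp.single i 1 = α := by
        ext j
        rcases eq_or_ne j i with rfl | hj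
        · rw [Finsupp.add_apply, Finsupp.tsub_apply, Finsupp.single_apply, if_pos rfl]
          have := Finsupp.mem_support_iff.mp hi
          omega
        · rw [Finsupp.add_apply, Finsupp.tsub_apply, Finsupp.single_apply,
            if_neg (fun hh => hj hh.symm)]
          simp
      rw [this]
      have hαi : ((α - Finsupp.single i 1 : Fin n →₀ ℕ) i : ℝ) + 1 = (α i : ℝ) := by
        rw [Finsupp.tsub_apply, Finsupp.single_apply, if_pos rfl]
        have := Finsupp.mem_support_iff.mp hi
        push_cast [Nat.cast_sub (by omega : 1 ≤ α i)]
        ring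
      rw [hαi]
    · rw [if_neg hi]
      have : α i = 0 := Finsupp.notMem_support_iff.mp hi
      rw [this]; simp
  rw [Finset.sum_congr rfl fun i _ => hterm i, ← Finset.sum_mul]
  rcases eq_or_ne (coeff α p) 0 with h | h
  · rw [h, mul_zero, mul_zero]
  · have hdeg := hp h
    rw [weight_one_eq_sum] at hdeg
    have hsum : ∑ i, (α i : ℝ) = (k : ℝ) := by
      rw [← hdeg]; push_cast; rfl
    rw [hsum]

/-- linear form -/
noncomputable def L (y : Fin n → ℝ) : MvPolynomial (Fin n) ℝ := ∑ i, C (y i) * X i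

/-- directional derivative -/
noncomputable def Dop (y : Fin n → ℝ) (p : MvPolynomial (Fin n) ℝ) : MvPolynomial (Fin n) ℝ :=
  ∑ i, C (y i) * pderiv i p

/-- Laplacian -/
noncomputable def lap (p : MvPolynomial (Fin n) ℝ) : MvPolynomial (Fin n) ℝ :=
  ∑ i, pderiv i (pderiv i p)

/-- squared radius -/
noncomputable def rsq : MvPolynomial (Fin n) ℝ := ∑ i, X i * X i

lemma isHomogeneous_L (y : Fin n → ℝ) : (L y).IsHomogeneous 1 :=
  IsHomogeneous.sum _ _ _ fun i _ => by
    simpa using (isHomogeneous_C_mul_X (y i) i)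

lemma isHomogeneous_rsq : (rsq (n := n)).IsHomogeneous 2 :=
  IsHomogeneous.sum _ _ _ fun i _ => by
    simpa using (isHomogeneous_X ℝ i).mul (isHomogeneous_X ℝ i)

lemma Dop_add (y : Fin n → ℝ) (p q : MvPolynomial (Fin n) ℝ) :
    Dop y (p + q) = Dop y p + Dop y q := by
  unfold Dop
  rw [← Finset.sum_add_distrib]
  exact Finset.sum_congr rfl fun i _ => by rw [map_add]; ring

lemma Dop_C_mul (y : Fin n → ℝ) (a : ℝ) (p : MvPolynomial (Fin n) ℝ) :
    Dop y (C a * p) = C a * Dop y p := by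
  unfold Dop
  rw [Finset.mul_sum]
  exact Finset.sum_congr rfl fun i _ => by rw [pderiv_C_mul]; ring

lemma Dop_sum {ι : Type*} (y : Fin n → ℝ) (s : Finset ι) (f : ι → MvPolynomial (Fin n) ℝ) :
    Dop y (∑ i ∈ s, f i) = ∑ i ∈ s, Dop y (f i) := by
  induction s using Finset.cons_induction with
  | empty => simp [Dop]
  | cons a s ha ih => rw [Finset.sum_cons, Finset.sum_cons, Dop_add, ih]

lemma lap_add (p q : MvPolynomial (Fin n) ℝ) : lap (p + q) = lap p + lap q := by
  unfold lap
  rw [← Finset.sum_add_distrib]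
  exact Finset.sum_congr rfl fun i _ => by rw [map_add, map_add]

lemma lap_C_mul (a : ℝ) (p : MvPolynomial (Fin n) ℝ) : lap (C a * p) = C a * lap p := by
  unfold lap
  rw [Finset.mul_sum]
  exact Finset.sum_congr rfl fun i _ => by rw [pderiv_C_mul, pderiv_C_mul]

lemma lap_sum {ι : Type*} (s : Finset ι) (f : ι → MvPolynomial (Fin n) ℝ) :
    lap (∑ i ∈ s, f i) = ∑ i ∈ s, lap (f i) := by
  induction s using Finset.cons_induction with
  | empty => simp [lap]
  | cons a s ha ih => rw [Finset.sum_cons, Finset.sum_cons, lap_add, ih]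

lemma lap_one : lap (1 : MvPolynomial (Fin n) ℝ) = 0 := by
  simp [lap]

lemma pderiv_L (y : Fin n → ℝ) (i : Fin n) : pderiv i (L y) = C (y i) := by
  unfold L
  rw [map_sum]
  rw [Finset.sum_eq_single i]
  · rw [pderiv_C_mul, pderiv_X_self, mul_one]
  · intro j _ hj
    rw [pderiv_C_mul, pderiv_X_of_ne hj, mul_zero]
  · intro h; exact absurd (Finset.mem_univ i) h

lemma lap_L (y : Fin n → ℝ) : lap (L y) = 0 := by
  unfold lap
  apply Finset.sum_eq_zero
  intro i _
  rw [pderiv_L, pderiv_C]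

lemma Dop_one (y : Fin n → ℝ) : Dop y (1 : MvPolynomial (Fin n) ℝ) = 0 := by
  simp [Dop]

lemma Dop_L (y y' : Fin n → ℝ) : Dop y (L y') = C (∑ i, y i * y' i) := by
  unfold Dop
  rw [map_sum C (fun i => y i * y' i) Finset.univ]
  exact Finset.sum_congr rfl fun i _ => by rw [pderiv_L, ← C_mul]

lemma pderiv_rsq (i : Fin n) : pderiv i (rsq (n := n)) = 2 * X i := by
  unfold rsq
  rw [map_sum, Finset.sum_eq_single i]
  · rw [pderiv_mul, pderiv_X_self]; ring
  · intro j _ hj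
    rw [pderiv_mul, pderiv_X_of_ne hj]; ring
  · intro h; exact absurd (Finset.mem_univ i) h

lemma Dop_L_mul (y y' : Fin n → ℝ) (p : MvPolynomial (Fin n) ℝ) :
    Dop y (L y' * p) = C (∑ i, y i * y' i) * p + L y' * Dop y p := by
  unfold Dop
  have h : ∀ i, C (y i) * pderiv i (L y' * p)
      = C (y i * y' i) * p + L y' * (C (y i) * pderiv i p) := fun i => by
    rw [pderiv_mul, pderiv_L, C_mul]; ring
  rw [Finset.sum_congr rfl fun i _ => h i, Finset.sum_add_distrib]
  congr 1
  · rw [← Finset.sum_mul, ← map_sum]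
  · rw [Finset.mul_sum]

lemma Dop_rsq_mul (y : Fin n → ℝ) (p : MvPolynomial (Fin n) ℝ) :
    Dop y (rsq * p) = 2 * (L y * p) + rsq * Dop y p := by
  unfold Dop
  have h : ∀ i, C (y i) * pderiv i (rsq * p)
      = 2 * (C (y i) * X i * p) + rsq * (C (y i) * pderiv i p) := fun i => by
    rw [pderiv_mul, pderiv_rsq]; ring
  rw [Finset.sum_congr rfl fun i _ => h i, Finset.sum_add_distrib]
  congr 1
  · unfold L
    rw [Finset.sum_mul, Finset.mul_sum]
  · rw [Finset.mul_sum]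

lemma lap_L_mul (y : Fin n → ℝ) (p : MvPolynomial (Fin n) ℝ) :
    lap (L y * p) = L y * lap p + 2 * Dop y p := by
  unfold lap
  have h : ∀ i, pderiv i (pderiv i (L y * p))
      = L y * pderiv i (pderiv i p) + 2 * (C (y i) * pderiv i p) := fun i => by
    rw [pderiv_mul, pderiv_L, map_add, pderiv_C_mul, pderiv_mul, pderiv_L]
    ring
  rw [Finset.sum_congr rfl fun i _ => h i, Finset.sum_add_distrib]
  congr 1
  · rw [Finset.mul_sum]
  · unfold Dop
    rw [Finset.mul_sum]

lemma lap_rsq_mul {k : ℕ} (p : MvPolynomial (Fin n) ℝ) (hp : p.IsHomogeneous k) :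
    lap (rsq * p) = rsq * lap p + C (4 * (k : ℝ) + 2 * n) * p := by
  unfold lap
  have h : ∀ i, pderiv i (pderiv i (rsq * p))
      = rsq * pderiv i (pderiv i p) + 4 * (X i * pderiv i p) + 2 * p := fun i => by
    have a1 : pderiv i (rsq * p) = 2 * X i * p + rsq * pderiv i p := by
      rw [pderiv_mul, pderiv_rsq]
    have pd2 : pderiv i (2 : MvPolynomial (Fin n) ℝ) = 0 := by
      have : (2 : MvPolynomial (Fin n) ℝ) = C 2 := by rw [map_ofNat]
      rw [this, pderiv_C]
    rw [a1, map_add, pderiv_mul, pderiv_mul, pderiv_mul, pderiv_rsq, pderiv_X_self, pd2]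
    ring
  rw [Finset.sum_congr rfl fun i _ => h i, Finset.sum_add_distrib, Finset.sum_add_distrib]
  have h1 : ∑ i : Fin n, rsq * pderiv i (pderiv i p) = rsq * ∑ i, pderiv i (pderiv i p) := by
    rw [Finset.mul_sum]
  have h2 : ∑ i : Fin n, (4 : MvPolynomial (Fin n) ℝ) * (X i * pderiv i p)
      = 4 * ∑ i, X i * pderiv i p := by
    rw [Finset.mul_sum]
  have h3 : ∑ _i : Fin n, (2 : MvPolynomial (Fin n) ℝ) * p = C (2 * (n:ℝ)) * p := by
    rw [Finset.sum_const, Finset.card_univ, Fintype.card_fin, nsmul_eq_mul]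
    have : ((n : ℕ) : MvPolynomial (Fin n) ℝ) = C (n : ℝ) := by
      rw [C_eq_coe_nat]
    rw [this, C_mul]
    have : (C (2:ℝ) : MvPolynomial (Fin n) ℝ) = 2 := by
      rw [map_ofNat]
    rw [this]
    ring
  rw [h1, h2, h3, euler hp]
  have h4 : (4 : MvPolynomial (Fin n) ℝ) * (C (k:ℝ) * p) = C (4 * (k:ℝ)) * p := by
    rw [C_mul]
    have : (C (4:ℝ) : MvPolynomial (Fin n) ℝ) = 4 := by rw [map_ofNat]
    rw [this]; ring
  rw [h4, C_add]
  ring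

lemma F_X_mul (i : Fin n) (p q : MvPolynomial (Fin n) ℝ) :
    F (X i * p) q = F p (pderiv i q) := by
  induction q using MvPolynomial.induction_on' with
  | monomial γ c =>
    rw [F_monomial_right, pderiv_monomial, F_monomial_right, coeff_X_mul']
    rcases eq_or_ne (γ i) 0 with h0 | h0
    · rw [if_neg (by simp [Finsupp.mem_support_iff, h0]), h0]
      push_cast
      ring
    · rw [if_pos (by simp [Finsupp.mem_support_iff, h0]), w_succ γ i h0]
      ring
  | add q q' hq hq' =>
    rw [F_add_right, map_add, F_add_right, hq, hq']

lemma F_L_mul (x : Fin n → ℝ) (p q : MvPolynomial (Fin n) ℝ) :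
    F (L x * p) q = F p (Dop x q) := by
  unfold L Dop
  rw [Finset.sum_mul, F_sum_right,
    show (∑ i, C (x i) * X i * p : MvPolynomial (Fin n) ℝ)
        = ∑ i, C (x i) * (X i * p) from Finset.sum_congr rfl fun i _ => by ring,
    F_sum_left]
  exact Finset.sum_congr rfl fun i _ => by
    rw [F_C_mul_left, F_X_mul, F_C_mul_right]

lemma F_rsq_mul (p q : MvPolynomial (Fin n) ℝ) :
    F (rsq * p) q = F p (lap q) := by
  unfold rsq lap
  rw [Finset.sum_mul, F_sum_right, F_sum_left]
  exact Finset.sum_congr rfl fun i _ => by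
    rw [show (X i * X i * p : MvPolynomial (Fin n) ℝ) = X i * (X i * p) by ring,
      F_X_mul, F_X_mul]

lemma isHomogeneous_Dop {y : Fin n → ℝ} {p : MvPolynomial (Fin n) ℝ} {k : ℕ}
    (hp : p.IsHomogeneous (k + 1)) : (Dop y p).IsHomogeneous k :=
  IsHomogeneous.sum _ _ _ fun i _ => by
    simpa using (isHomogeneous_C (σ := Fin n) (y i)).mul (isHomogeneous_pderiv hp)

lemma eval_Dop (x : Fin n → ℝ) {p : MvPolynomial (Fin n) ℝ} {k : ℕ}
    (hp : p.IsHomogeneous k) : eval x (Dop x p) = (k : ℝ) * eval x p := by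
  have h := congrArg (eval x) (euler hp)
  simp only [map_sum, map_mul, eval_X, eval_C] at h
  unfold Dop
  simp only [map_sum, map_mul, eval_C]
  exact h

/-- reproducing property -/
lemma F_repro (x : Fin n → ℝ) : ∀ (k : ℕ) (p : MvPolynomial (Fin n) ℝ),
    p.IsHomogeneous k → F p ((L x) ^ k) = (Nat.factorial k : ℝ) * eval x p := by
  intro k
  induction k with
  | zero =>
    intro p hp
    have hp0 : p = C (coeff 0 p) := by
      apply MvPolynomial.ext
      intro α
      rcases eq_or_ne α 0 with rfl | hα
      · simp
      · rw [coeff_C, if_neg (by exact fun h => hα h.symm)]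
        by_contra h
        have hz := hp h
        rw [weight_one_eq_sum] at hz
        exact hα (by
          ext j
          have := Finset.sum_eq_zero_iff.mp hz j (Finset.mem_univ j)
          simp [this])
    rw [pow_zero, show (1 : MvPolynomial (Fin n) ℝ) = monomial 0 1 by
        rw [← C_1, C_apply], F_monomial_right, w_zero]
    conv_rhs => rw [hp0]
    rw [eval_C]
    simp
  | succ k ih =>
    intro p hp
    rw [pow_succ, mul_comm ((L x)^k) (L x), F_comm, F_L_mul, F_comm,
      ih (Dop x p) (isHomogeneous_Dop hp), eval_Dop x hp]
    push_cast [Nat.factorial_succ]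
    ring


lemma Dop_sub (y : Fin n → ℝ) (p q : MvPolynomial (Fin n) ℝ) :
    Dop y (p - q) = Dop y p - Dop y q := by
  unfold Dop
  rw [← Finset.sum_sub_distrib]
  exact Finset.sum_congr rfl fun i _ => by rw [map_sub]; ring

lemma lap_sub (p q : MvPolynomial (Fin n) ℝ) : lap (p - q) = lap p - lap q := by
  unfold lap
  rw [← Finset.sum_sub_distrib]
  exact Finset.sum_congr rfl fun i _ => by rw [map_sub, map_sub]

lemma eval_L (x y : Fin n → ℝ) : eval x (L y) = ∑ i, y i * x i := by
  unfold L
  rw [map_sum]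
  exact Finset.sum_congr rfl fun i _ => by rw [map_mul, eval_C, eval_X]

lemma eval_rsq (x : Fin n → ℝ) : eval x (rsq (n := n)) = ∑ i, x i * x i := by
  unfold rsq
  rw [map_sum]
  exact Finset.sum_congr rfl fun i _ => by rw [map_mul, eval_X]

/-- coefficients of the recurrence -/
noncomputable def ca (n k : ℕ) : ℝ := (2*(k:ℝ)+(n:ℝ))/((k:ℝ)+(n:ℝ)-1)
noncomputable def cb (n k : ℕ) : ℝ := ((k:ℝ)+1)/((k:ℝ)+(n:ℝ)-1)

/-- zonal polynomials -/
noncomputable def Z (n : ℕ) (y : Fin n → ℝ) : ℕ → MvPolynomial (Fin n) ℝ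
  | 0 => 1
  | 1 => L y
  | (k+2) => C (ca n k) * (L y * Z n y (k+1)) - C (cb n k) * (rsq * Z n y k)

lemma isHom_of_eq {p : MvPolynomial (Fin n) ℝ} {m m' : ℕ}
    (h : p.IsHomogeneous m) (e : m = m') : p.IsHomogeneous m' := e ▸ h

lemma Zhom (y : Fin n → ℝ) : ∀ k, (Z n y k).IsHomogeneous k := by
  have key : ∀ k, (Z n y k).IsHomogeneous k ∧ (Z n y (k+1)).IsHomogeneous (k+1) := by
    intro k
    induction k with
    | zero => exact ⟨isHomogeneous_one _ _, isHomogeneous_L y⟩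
    | succ k ih =>
      refine ⟨ih.2, ?_⟩
      show (C (ca n k) * (L y * Z n y (k+1)) - C (cb n k) * (rsq * Z n y k)).IsHomogeneous (k+2)
      apply IsHomogeneous.sub
      · exact isHom_of_eq ((isHomogeneous_C _ _).mul ((isHomogeneous_L y).mul ih.2)) (by omega)
      · exact isHom_of_eq ((isHomogeneous_C _ _).mul (isHomogeneous_rsq.mul ih.1)) (by omega)
  exact fun k => (key k).1

lemma Zeval (x y : Fin n → ℝ) (hx : ∑ i, x i * x i = 1) :
    ∀ k, eval x (Z n y k) = gegenbauer n k (∑ i, y i * x i) := by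
  have key : ∀ k, eval x (Z n y k) = gegenbauer n k (∑ i, y i * x i) ∧
      eval x (Z n y (k+1)) = gegenbauer n (k+1) (∑ i, y i * x i) := by
    intro k
    induction k with
    | zero =>
      constructor
      · show eval x (1 : MvPolynomial (Fin n) ℝ) = 1
        simp
      · show eval x (L y) = (∑ i, y i * x i)
        exact eval_L x y
    | succ k ih =>
      refine ⟨ih.2, ?_⟩
      show eval x (C (ca n k) * (L y * Z n y (k+1)) - C (cb n k) * (rsq * Z n y k))
          = gegenbauer n (k+2) (∑ i, y i * x i)
      rw [map_sub, map_mul, map_mul, map_mul, map_mul, eval_C, eval_C, eval_L, eval_rsq,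
        hx, ih.1, ih.2]
      show _ = ((2 * ((k : ℝ) + 2) + (n : ℝ) - 4) * (∑ i, y i * x i) * gegenbauer n (k + 1) _
        - (((k : ℝ) + 2) - 1) * gegenbauer n k _) / (((k : ℝ) + 2) + (n : ℝ) - 3)
      unfold ca cb
      rw [one_mul]
      have e1 : 2 * ((k : ℝ) + 2) + (n : ℝ) - 4 = 2*(k:ℝ)+(n:ℝ) := by ring
      have e2 : ((k : ℝ) + 2) + (n : ℝ) - 3 = (k:ℝ)+(n:ℝ)-1 := by ring
      have e3 : ((k : ℝ) + 2) - 1 = (k:ℝ)+1 := by ring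
      rw [e1, e2, e3]
      ring
  exact fun k => (key k).1

section
variable (hn : 2 ≤ n)
include hn

lemma hden (k : ℕ) : ((k:ℝ)+(n:ℝ)-1) ≠ 0 := by
  have h2 : (2:ℝ) ≤ (n:ℝ) := by exact_mod_cast hn
  have hk : (0:ℝ) ≤ (k:ℝ) := Nat.cast_nonneg k
  nlinarith

lemma hnum (k : ℕ) : (2*(k:ℝ)+(n:ℝ)) ≠ 0 := by
  have h2 : (2:ℝ) ≤ (n:ℝ) := by exact_mod_cast hn
  have hk : (0:ℝ) ≤ (k:ℝ) := Nat.cast_nonneg k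
  nlinarith

lemma ca_pos (k : ℕ) : 0 < ca n k := by
  have h2 : (2:ℝ) ≤ (n:ℝ) := by exact_mod_cast hn
  have hk : (0:ℝ) ≤ (k:ℝ) := Nat.cast_nonneg k
  unfold ca
  apply div_pos <;> nlinarith

lemma K1 (k : ℕ) : ca n k * (2*((k:ℝ)+1)) = cb n k * (4*(k:ℝ)+2*(n:ℝ)) := by
  unfold ca cb
  field_simp
  ring

lemma K2 (k : ℕ) : ca n (k+1) * ca n k + ca n (k+1)*((k:ℝ)+2) - 2*cb n (k+1)
    = ((k:ℝ)+3)*ca n k := by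
  unfold ca cb
  have h1 := hden hn k
  have h2 := hden hn (k+1)
  push_cast at h1 h2 ⊢
  field_simp
  ring

lemma K3 (k : ℕ) : ca n (k+1) * cb n k + cb n (k+1)*((k:ℝ)+1) = ((k:ℝ)+3)*cb n k := by
  unfold ca cb
  have h1 := hden hn k
  have h2 := hden hn (k+1)
  push_cast at h1 h2 ⊢
  field_simp
  ring

lemma Kbase : ca n 0 - cb n 0 = 1 := by
  unfold ca cb
  have h1 := hden hn 0
  have h1' : (-1 + (n:ℝ)) ≠ 0 := by
    intro h; apply h1; push_cast; linarith
  push_cast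
  rw [div_sub_div_same, div_eq_one_iff_eq (by intro h; exact h1' (by linarith))]
  ring

lemma ZharmDir (y : Fin n → ℝ) (hy : ∑ i, y i * y i = 1) : ∀ k,
    lap (Z n y k) = 0 ∧ lap (Z n y (k+1)) = 0 ∧
    Dop y (Z n y (k+1)) = C ((k:ℝ)+1) * Z n y k ∧
    Dop y (Z n y (k+2)) = C ((k:ℝ)+2) * Z n y (k+1) := by
  intro k
  induction k with
  | zero =>
    refine ⟨lap_one, lap_L y, ?_, ?_⟩
    · rw [show Z n y (0+1) = L y from rfl, show Z n y 0 = (1 : MvPolynomial (Fin n) ℝ) from rfl,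
        Dop_L, hy]
      norm_num
    · have hZ2 : Z n y (0+2) = C (ca n 0) * (L y * L y) - C (cb n 0) * (rsq * 1) := rfl
      rw [hZ2, Dop_sub, Dop_C_mul, Dop_C_mul, Dop_L_mul, Dop_rsq_mul, Dop_L, Dop_one, hy,
        show Z n y (0+1) = L y from rfl]
      have HB : (C (ca n 0) : MvPolynomial (Fin n) ℝ) - C (cb n 0) = 1 := by
        rw [← C_sub, Kbase hn, C_1]
      norm_num
      simp only [map_ofNat]
      linear_combination (2 : MvPolynomial (Fin n) ℝ) * HB * L y
  | succ k ih =>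
    obtain ⟨ih0, ih1, ihD1, ihD2⟩ := ih
    have hZ2 : Z n y (k+2) = C (ca n k) * (L y * Z n y (k+1)) - C (cb n k) * (rsq * Z n y k) :=
      rfl
    have hZ3 : Z n y (k+3)
        = C (ca n (k+1)) * (L y * Z n y (k+2)) - C (cb n (k+1)) * (rsq * Z n y (k+1)) := rfl
    have hlap2 : lap (Z n y (k+2)) = 0 := by
      rw [hZ2, lap_sub, lap_C_mul, lap_C_mul, lap_L_mul, lap_rsq_mul _ (Zhom y k), ih0, ih1,
        ihD1]
      have HK1 := congrArg (fun r : ℝ => (C r : MvPolynomial (Fin n) ℝ)) (K1 hn k)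
      simp only [C_mul, C_add, C_1, map_ofNat] at HK1
      simp only [C_add, C_mul, C_1, map_ofNat]
      linear_combination HK1 * Z n y k
    have goal3 : Dop y (Z n y (k+3)) = C ((k:ℝ)+3) * Z n y (k+2) := by
      rw [hZ3, Dop_sub, Dop_C_mul, Dop_C_mul, Dop_L_mul, Dop_rsq_mul, hy, ihD2, ihD1, hZ2]
      have HK2 := congrArg (fun r : ℝ => (C r : MvPolynomial (Fin n) ℝ)) (K2 hn k)
      have HK3 := congrArg (fun r : ℝ => (C r : MvPolynomial (Fin n) ℝ)) (K3 hn k)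
      simp only [C_mul, C_add, C_sub, C_1, map_ofNat] at HK2 HK3
      simp only [C_add, C_mul, C_1, map_ofNat]
      linear_combination HK2 * (L y * Z n y (k+1)) - HK3 * (rsq * Z n y k)
    refine ⟨ih1, hlap2, ?_, ?_⟩
    · convert ihD2 using 3
      push_cast
      ring
    · convert goal3 using 3
      push_cast
      ring


lemma Zharm (y : Fin n → ℝ) (hy : ∑ i, y i * y i = 1) (k : ℕ) : lap (Z n y k) = 0 :=
  (ZharmDir hn y hy k).1

/-- leading coefficients of the harmonic decomposition -/
noncomputable def cc (n : ℕ) : ℕ → ℝ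
  | 0 => 1
  | 1 => 1
  | (k+2) => cc n (k+1) / ca n k

lemma cc_pos : ∀ k, 0 < cc n k := by
  have key : ∀ k, 0 < cc n k ∧ 0 < cc n (k+1) := by
    intro k
    induction k with
    | zero => constructor <;> norm_num [cc]
    | succ k ih =>
      refine ⟨ih.2, ?_⟩
      show 0 < cc n (k+1) / ca n k
      exact div_pos ih.2 (ca_pos hn k)
  exact fun k => (key k).1

lemma decomp (x : Fin n → ℝ) : ∀ k, ∃ v, (L x)^k = C (cc n k) * Z n x k + rsq * v := by
  have key : ∀ k, ∃ v, (L x)^(k+1) = C (cc n (k+1)) * Z n x (k+1) + rsq * v := by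
    intro k
    induction k with
    | zero =>
      refine ⟨0, ?_⟩
      show (L x)^1 = C (cc n 1) * L x + rsq * 0
      norm_num [show cc n 1 = 1 from rfl]
    | succ k ih =>
      obtain ⟨v, hv⟩ := ih
      have hZ2 : Z n x (k+2) = C (ca n k) * (L x * Z n x (k+1)) - C (cb n k) * (rsq * Z n x k) :=
        rfl
      have hca := (ca_pos hn k).ne'
      have hLZ : L x * Z n x (k+1)
          = C (1/ca n k) * Z n x (k+2) + C (cb n k/ca n k) * (rsq * Z n x k) := by
        rw [hZ2]
        have H1 : (C (1/ca n k) * C (ca n k) : MvPolynomial (Fin n) ℝ) = 1 := by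
          rw [← C_mul, one_div, inv_mul_cancel₀ hca, C_1]
        have H2 : (C (1/ca n k) * C (cb n k) : MvPolynomial (Fin n) ℝ) = C (cb n k/ca n k) := by
          rw [← C_mul]
          congr 1
          field_simp
        linear_combination H2 * (rsq * Z n x k) - H1 * (L x * Z n x (k+1))
      refine ⟨C (cc n (k+1) * (cb n k / ca n k)) * Z n x k + L x * v, ?_⟩
      have HC1 : (C (cc n (k+2)) : MvPolynomial (Fin n) ℝ)
          = C (cc n (k+1)) * C (1/ca n k) := by
        rw [← C_mul]
        congr 1
        rw [show cc n (k+2) = cc n (k+1)/ca n k from rfl]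
        ring
      have HC2 : (C (cc n (k+1) * (cb n k/ca n k)) : MvPolynomial (Fin n) ℝ)
          = C (cc n (k+1)) * C (cb n k / ca n k) := by rw [← C_mul]
      calc (L x)^(k+2) = C (cc n (k+1)) * (L x * Z n x (k+1)) + rsq * (L x * v) := by
            rw [pow_succ, hv]; ring
        _ = C (cc n (k+2)) * Z n x (k+2)
            + rsq * (C (cc n (k+1) * (cb n k / ca n k)) * Z n x k + L x * v) := by
            rw [hLZ]
            linear_combination (-(Z n x (k+2))) * HC1 - (rsq * Z n x k) * HC2
  intro k
  match k with
  | 0 => exact ⟨0, by norm_num [show cc n 0 = 1 from rfl, show Z n x 0 = 1 from rfl]⟩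
  | (k+1) => exact key k

end

end Sch

end SchProof

open MvPolynomial Sch in
/-- Schoenberg/Delsarte positivity of Gegenbauer sums. -/
theorem stmt3 (n : ℕ) (hn : 2 ≤ n) (k : ℕ) (hk : 1 ≤ k)
    (C : Finset (EuclideanSpace ℝ (Fin n))) (hC : ∀ x ∈ C, ‖x‖ = 1) :
    0 ≤ ∑ x ∈ C, ∑ y ∈ C, gegenbauer n k ⟪x, y⟫ := by
  classical
  have hunit : ∀ x ∈ C, ∑ i, (x : Fin n → ℝ) i * x i = 1 := by
    intro x hx
    have h1 : ⟪x, x⟫ = ‖x‖ ^ 2 := real_inner_self_eq_norm_sq x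
    rw [hC x hx] at h1
    have h2 : ⟪x, x⟫ = ∑ i, (x : Fin n → ℝ) i * x i := by
      rw [PiLp.inner_apply]
      exact Finset.sum_congr rfl fun i _ => by
        simp [RCLike.inner_apply, starRingEnd_apply]; ring
    rw [h2] at h1
    rw [h1]; norm_num
  have hinner : ∀ x ∈ C, ∀ y ∈ C, ⟪x, y⟫ = ∑ i, (y : Fin n → ℝ) i * (x : Fin n → ℝ) i := by
    intro x _ y _
    rw [PiLp.inner_apply]
    exact Finset.sum_congr rfl fun i _ => by
      simp [RCLike.inner_apply, starRingEnd_apply]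
  set Zs : MvPolynomial (Fin n) ℝ := ∑ y ∈ C, Z n y k with hZs
  have hZshom : Zs.IsHomogeneous k := IsHomogeneous.sum _ _ _ fun y _ => Zhom y k
  have step1 : ∑ x ∈ C, ∑ y ∈ C, gegenbauer n k ⟪x, y⟫ = ∑ x ∈ C, eval (x : Fin n → ℝ) Zs := by
    refine Finset.sum_congr rfl fun x hx => ?_
    rw [hZs, map_sum]
    refine Finset.sum_congr rfl fun y hy => ?_
    rw [hinner x hx y hy, ← Zeval (x : Fin n → ℝ) y (hunit x hx) k]
  have step2 : ∀ x ∈ C, eval (x : Fin n → ℝ) Zs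
      = (Nat.factorial k : ℝ)⁻¹ * F Zs ((L (x : Fin n → ℝ))^k) := by
    intro x hx
    rw [F_repro _ k Zs hZshom]
    field_simp
  -- decomposition of the sum of powers
  choose v hv using fun (x : EuclideanSpace ℝ (Fin n)) => decomp hn (x : Fin n → ℝ) k
  have hlapZs : lap Zs = 0 := by
    rw [hZs, lap_sum]
    exact Finset.sum_eq_zero fun y hy => Zharm hn y (hunit y hy) k
  have key : F Zs (∑ x ∈ C, (L (x : Fin n → ℝ))^k) = cc n k * F Zs Zs := by
    have : ∑ x ∈ C, (L (x : Fin n → ℝ))^k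
        = MvPolynomial.C (cc n k) * Zs + rsq * (∑ x ∈ C, v x) := by
      rw [Finset.sum_congr rfl fun x _ => hv x, Finset.sum_add_distrib, hZs,
        Finset.mul_sum, Finset.mul_sum]
    rw [this, F_add_right, F_C_mul_right, F_comm Zs (rsq * _), F_rsq_mul, hlapZs,
      F_zero_right, add_zero]
  calc (0:ℝ) ≤ (Nat.factorial k : ℝ)⁻¹ * (cc n k * F Zs Zs) := by
        have h1 := F_self_nonneg Zs
        have h2 := (cc_pos hn k).le
        positivity
    _ = ∑ x ∈ C, ∑ y ∈ C, gegenbauer n k ⟪x, y⟫ := by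
        rw [step1, Finset.sum_congr rfl step2, ← Finset.mul_sum, ← F_sum_right, key]
end

section
/- Let C be a finite set of unit vectors in ℝ^n such that the inner product of any two distinct vectors of C lies in {a,b} with a,b < 1. Suppose p ≥ 1 and nonnegative reals α_1, α_2 satisfy: for the optimal solution of the linear program maximizing 1+α_1+α_2 subject to 1 + α_1·G_i^{(n)}(a) + α_2·G_i^{(n)}(b) ≥ 0 for i = 0,...,p and α_1, α_2 ≥ 0, the value M of the program is finite. Then |C| ≤ M. (Delsarte–Goethals–Seidel LP bound for two-distance sets.) -/
open RealInnerProductSpace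

namespace DGS

open MvPolynomial

variable {n : ℕ}

/-- weight for the Fischer inner product -/
noncomputable def wt (α : Fin n →₀ ℕ) : ℝ := ∏ i, ((α i).factorial : ℝ)

lemma wt_pos (α : Fin n →₀ ℕ) : 0 < wt α :=
  Finset.prod_pos (fun i _ => by exact_mod_cast (α i).factorial_pos)

lemma wt_zero : wt (0 : Fin n →₀ ℕ) = 1 := by simp [wt, Nat.factorial]

lemma wt_add_single (α : Fin n →₀ ℕ) (i : Fin n) :
    wt (α + Finsupp.single i 1) = ((α i : ℝ) + 1) * wt α := by
  unfold wt
  rw [← Finset.mul_prod_erase Finset.univ _ (Finset.mem_univ i),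
      ← Finset.mul_prod_erase Finset.univ (fun j => ((α j).factorial : ℝ)) (Finset.mem_univ i)]
  have h2 : ∀ j ∈ Finset.univ.erase i,
      (((α + Finsupp.single i 1 : Fin n →₀ ℕ) j).factorial : ℝ) = ((α j).factorial : ℝ) := by
    intro j hj
    have hne : j ≠ i := Finset.ne_of_mem_erase hj
    rw [Finsupp.add_apply, Finsupp.single_apply, if_neg (Ne.symm hne), add_zero]
  rw [Finset.prod_congr rfl h2]
  have h1 : (α + Finsupp.single i 1 : Fin n →₀ ℕ) i = α i + 1 := by simp
  rw [h1, Nat.factorial_succ]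
  push_cast
  ring

/-- The Fischer bilinear form. -/
noncomputable def FF (p q : MvPolynomial (Fin n) ℝ) : ℝ :=
  ∑ α ∈ p.support, p.coeff α * q.coeff α * wt α

lemma FF_eq_of_subset {p q : MvPolynomial (Fin n) ℝ} {T : Finset (Fin n →₀ ℕ)}
    (h : p.support ⊆ T) : FF p q = ∑ α ∈ T, p.coeff α * q.coeff α * wt α :=
  Finset.sum_subset h (fun α _ hα => by
    rw [MvPolynomial.notMem_support_iff.mp hα]; ring)

lemma FF_zero_left (q : MvPolynomial (Fin n) ℝ) : FF 0 q = 0 := by simp [FF]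

lemma FF_add_left (p p' q : MvPolynomial (Fin n) ℝ) :
    FF (p + p') q = FF p q + FF p' q := by
  classical
  rw [FF_eq_of_subset (q := q) (T := p.support ∪ p'.support)
      (le_trans (MvPolynomial.support_add) le_rfl),
    FF_eq_of_subset (q := q) (T := p.support ∪ p'.support) Finset.subset_union_left,
    FF_eq_of_subset (q := q) (T := p.support ∪ p'.support) Finset.subset_union_right,
    ← Finset.sum_add_distrib]
  exact Finset.sum_congr rfl (fun α _ => by rw [MvPolynomial.coeff_add]; ring)

lemma FF_smul_left (c : ℝ) (p q : MvPolynomial (Fin n) ℝ) :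
    FF (c • p) q = c * FF p q := by
  classical
  rw [FF_eq_of_subset (q := q) (T := p.support) (MvPolynomial.support_smul),
    FF, Finset.mul_sum]
  exact Finset.sum_congr rfl (fun α _ => by
    rw [MvPolynomial.coeff_smul]; simp [smul_eq_mul]; ring)

lemma FF_add_right (p q q' : MvPolynomial (Fin n) ℝ) :
    FF p (q + q') = FF p q + FF p q' := by
  rw [FF, FF, FF, ← Finset.sum_add_distrib]
  exact Finset.sum_congr rfl (fun α _ => by rw [MvPolynomial.coeff_add]; ring)

lemma FF_smul_right (c : ℝ) (p q : MvPolynomial (Fin n) ℝ) :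
    FF p (c • q) = c * FF p q := by
  rw [FF, FF, Finset.mul_sum]
  exact Finset.sum_congr rfl (fun α _ => by
    rw [MvPolynomial.coeff_smul]; simp [smul_eq_mul]; ring)

lemma FF_sum_left {ι : Type*} (s : Finset ι) (f : ι → MvPolynomial (Fin n) ℝ)
    (q : MvPolynomial (Fin n) ℝ) :
    FF (∑ x ∈ s, f x) q = ∑ x ∈ s, FF (f x) q := by
  classical
  induction s using Finset.induction with
  | empty => simp [FF_zero_left]
  | insert _ _ h ih => rw [Finset.sum_insert h, FF_add_left, ih, Finset.sum_insert h]

lemma FF_sum_right {ι : Type*} (s : Finset ι) (f : ι → MvPolynomial (Fin n) ℝ)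
    (p : MvPolynomial (Fin n) ℝ) :
    FF p (∑ x ∈ s, f x) = ∑ x ∈ s, FF p (f x) := by
  classical
  induction s using Finset.induction with
  | empty => simp [FF]
  | insert _ _ h ih => rw [Finset.sum_insert h, FF_add_right, ih, Finset.sum_insert h]

lemma FF_monomial_left (d : Fin n →₀ ℕ) (c : ℝ) (q : MvPolynomial (Fin n) ℝ) :
    FF (monomial d c) q = c * q.coeff d * wt d := by
  rw [FF_eq_of_subset (q := q) (T := {d}) MvPolynomial.support_monomial_subset,
    Finset.sum_singleton, MvPolynomial.coeff_monomial, if_pos rfl]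

lemma FF_nonneg (p : MvPolynomial (Fin n) ℝ) : 0 ≤ FF p p :=
  Finset.sum_nonneg (fun α _ => mul_nonneg (mul_self_nonneg _) (wt_pos α).le)



lemma degree_fin (d : Fin n →₀ ℕ) : d.degree = ∑ i, d i := by
  rw [Finsupp.degree]
  exact Finset.sum_subset (Finset.subset_univ _)
    (fun i _ hi => Finsupp.notMem_support_iff.mp hi)

lemma degree_add' (a b : Fin n →₀ ℕ) : (a + b).degree = a.degree + b.degree := by
  simp [degree_fin, Finsupp.add_apply, Finset.sum_add_distrib]

lemma degree_single' (i : Fin n) : (Finsupp.single i 1 : Fin n →₀ ℕ).degree = 1 := by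
  rw [degree_fin]
  simp [Finsupp.single_apply]

lemma coeff_pderiv (i : Fin n) (q : MvPolynomial (Fin n) ℝ) (α : Fin n →₀ ℕ) :
    (pderiv i q).coeff α = q.coeff (α + Finsupp.single i 1) * ((α i : ℝ) + 1) := by
  induction q using MvPolynomial.induction_on' with
  | add p q hp hq => simp only [map_add, MvPolynomial.coeff_add, hp, hq]; ring
  | monomial d c =>
    rw [pderiv_monomial]
    by_cases hd : d i = 0
    · have hsub : d - Finsupp.single i 1 = d := by
        ext j
        rcases eq_or_ne j i with rfl | hne
        · simp [Finsupp.tsub_apply, Finsupp.single_apply, hd]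
        · simp [Finsupp.tsub_apply, Finsupp.single_apply, Ne.symm hne]
      have hne : d ≠ α + Finsupp.single i 1 := by
        intro h
        have h5 : d i = (α + Finsupp.single i 1 : Fin n →₀ ℕ) i := by rw [h]
        rw [hd, Finsupp.add_apply, Finsupp.single_apply, if_pos rfl] at h5
        omega
      rw [hsub, MvPolynomial.coeff_monomial, MvPolynomial.coeff_monomial, if_neg hne]
      by_cases he : d = α
      · rw [if_pos he, hd]; simp
      · rw [if_neg he]; ring
    · have h1 : Finsupp.single i 1 ≤ d := by
        rw [Finsupp.single_le_iff]; omega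
      have h2 : d - Finsupp.single i 1 + Finsupp.single i 1 = d := tsub_add_cancel_of_le h1
      rw [MvPolynomial.coeff_monomial, MvPolynomial.coeff_monomial]
      by_cases he : d - Finsupp.single i 1 = α
      · have hd2 : d = α + Finsupp.single i 1 := by rw [← he]; exact h2.symm
        rw [if_pos he, if_pos hd2]
        have hαi : α i = d i - 1 := by
          rw [← he]; simp [Finsupp.tsub_apply, Finsupp.single_apply]
        have h3 : ((α i : ℕ) : ℝ) + 1 = (d i : ℝ) := by
          rw [hαi]
          have h4 : 1 ≤ d i := by omega
          push_cast [h4]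
          ring
        rw [h3]
      · have : d ≠ α + Finsupp.single i 1 := by
          intro h
          exact he (by rw [h, add_tsub_cancel_right])
        rw [if_neg he, if_neg this]
        ring

lemma FF_X_mul (i : Fin n) (p q : MvPolynomial (Fin n) ℝ) :
    FF (X i * p) q = FF p (pderiv i q) := by
  induction p using MvPolynomial.induction_on' with
  | add p p' hp hp' => rw [mul_add, FF_add_left, FF_add_left, hp, hp']
  | monomial d c =>
    have : (X i : MvPolynomial (Fin n) ℝ) * monomial d c
        = monomial (d + Finsupp.single i 1) c := by
      rw [MvPolynomial.X, MvPolynomial.monomial_mul, one_mul, add_comm]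
    rw [this, FF_monomial_left, FF_monomial_left, coeff_pderiv, wt_add_single]
    ring

/-- the linear form `⟨x, ·⟩` as a polynomial -/
noncomputable def Lf (x : Fin n → ℝ) : MvPolynomial (Fin n) ℝ := ∑ i, C (x i) * X i

/-- the squared norm polynomial -/
noncomputable def Sq (n : ℕ) : MvPolynomial (Fin n) ℝ := ∑ i, X i * X i

/-- directional derivative operator -/
noncomputable def Dop (x : Fin n → ℝ) (p : MvPolynomial (Fin n) ℝ) : MvPolynomial (Fin n) ℝ :=
  ∑ i, C (x i) * pderiv i p

/-- Laplacian -/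
noncomputable def Lap (p : MvPolynomial (Fin n) ℝ) : MvPolynomial (Fin n) ℝ :=
  ∑ i, pderiv i (pderiv i p)

lemma FF_L_mul (x : Fin n → ℝ) (p q : MvPolynomial (Fin n) ℝ) :
    FF (Lf x * p) q = FF p (Dop x q) := by
  have : Lf x * p = ∑ i, (x i) • (X i * p) := by
    rw [Lf, Finset.sum_mul]
    exact Finset.sum_congr rfl (fun i _ => by
      rw [← MvPolynomial.smul_eq_C_mul, smul_mul_assoc])
  rw [this, FF_sum_left, Dop]
  rw [FF_sum_right]
  exact Finset.sum_congr rfl (fun i _ => by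
    rw [FF_smul_left, FF_X_mul, ← MvPolynomial.smul_eq_C_mul, FF_smul_right])

lemma FF_Sq_mul (p q : MvPolynomial (Fin n) ℝ) :
    FF (Sq n * p) q = FF p (Lap q) := by
  have : Sq n * p = ∑ i, X i * (X i * p) := by
    rw [Sq, Finset.sum_mul]
    exact Finset.sum_congr rfl (fun i _ => by rw [mul_assoc])
  rw [this, FF_sum_left, Lap, FF_sum_right]
  exact Finset.sum_congr rfl (fun i _ => by rw [FF_X_mul, FF_X_mul])


lemma X_mul_pderiv_monomial (i : Fin n) (d : Fin n →₀ ℕ) (c : ℝ) :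
    (X i : MvPolynomial (Fin n) ℝ) * pderiv i (monomial d c) = monomial d (c * (d i : ℝ)) := by
  rw [pderiv_monomial]
  by_cases hd : d i = 0
  · rw [hd]
    simp
  · have h1 : Finsupp.single i 1 ≤ d := by rw [Finsupp.single_le_iff]; omega
    have h2 : Finsupp.single i 1 + (d - Finsupp.single i 1) = d := by
      rw [add_comm]; exact tsub_add_cancel_of_le h1
    rw [MvPolynomial.X, MvPolynomial.monomial_mul, one_mul, h2]

lemma euler_identity (k : ℕ) (p : MvPolynomial (Fin n) ℝ) (hp : p.IsHomogeneous k) :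
    ∑ i, (X i : MvPolynomial (Fin n) ℝ) * pderiv i p = (k : ℝ) • p := by
  conv_lhs => rw [p.as_sum]
  conv_rhs => rw [p.as_sum]
  rw [Finset.smul_sum]
  have : ∀ i, (X i : MvPolynomial (Fin n) ℝ) *
      pderiv i (∑ α ∈ p.support, monomial α (p.coeff α))
      = ∑ α ∈ p.support, monomial α (p.coeff α * (α i : ℝ)) := by
    intro i
    rw [map_sum, Finset.mul_sum]
    exact Finset.sum_congr rfl (fun α _ => X_mul_pderiv_monomial i α (p.coeff α))
  rw [Finset.sum_congr rfl (fun i _ => this i), Finset.sum_comm]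
  refine Finset.sum_congr rfl (fun α hα => ?_)
  have hdeg : α.degree = k :=
    (DFunLike.congr_fun Finsupp.degree_eq_weight_one α : α.degree = Finsupp.weight 1 α).trans
      (hp (MvPolynomial.mem_support_iff.mp hα))
  rw [← map_sum (monomial α)]
  have : (k : ℝ) • monomial α (p.coeff α) = monomial α ((k : ℝ) * p.coeff α) := by
    rw [← map_smul (monomial α)]; rw [smul_eq_mul]
  rw [this]
  congr 1
  rw [← Finset.mul_sum]
  rw [show ∑ i, ((α i : ℕ) : ℝ) = ((∑ i, α i : ℕ) : ℝ) by push_cast; ring]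
  rw [← degree_fin, hdeg]
  ring

lemma isHomogeneous_pderiv {p : MvPolynomial (Fin n) ℝ} {k : ℕ} (i : Fin n)
    (hp : p.IsHomogeneous (k + 1)) : (pderiv i p).IsHomogeneous k := by
  intro d hd
  rw [coeff_pderiv] at hd
  have h1 : p.coeff (d + Finsupp.single i 1) ≠ 0 := fun h => hd (by rw [h]; ring)
  have h2 := hp h1
  have e : ∀ (a : Fin n →₀ ℕ), (Finsupp.weight 1) a = a.degree :=
    fun a => (DFunLike.congr_fun Finsupp.degree_eq_weight_one a).symm
  rw [e] at h2 ⊢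
  rw [degree_add', degree_single'] at h2
  omega


lemma pderiv_Lf (i : Fin n) (x : Fin n → ℝ) : pderiv i (Lf x) = C (x i) := by
  rw [Lf, map_sum]
  rw [Finset.sum_eq_single i
    (fun j _ hj => by rw [pderiv_C_mul, pderiv_X_of_ne hj, mul_zero])
    (fun h => absurd (Finset.mem_univ i) h)]
  rw [pderiv_C_mul, pderiv_X_self, mul_one]

lemma pderiv_Sq (i : Fin n) : pderiv i (Sq n) = X i + X i := by
  rw [Sq, map_sum]
  rw [Finset.sum_eq_single i
    (fun j _ hj => by rw [pderiv_mul, pderiv_X_of_ne hj, zero_mul, mul_zero, add_zero])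
    (fun h => absurd (Finset.mem_univ i) h)]
  rw [pderiv_mul, pderiv_X_self, one_mul, mul_one]

lemma Dop_add (x : Fin n → ℝ) (p q : MvPolynomial (Fin n) ℝ) :
    Dop x (p + q) = Dop x p + Dop x q := by
  simp [Dop, map_add, mul_add, Finset.sum_add_distrib]

lemma Dop_smul (x : Fin n → ℝ) (c : ℝ) (p : MvPolynomial (Fin n) ℝ) :
    Dop x (c • p) = c • Dop x p := by
  simp [Dop, map_smul, Finset.smul_sum, mul_smul_comm]

lemma Dop_sub (x : Fin n → ℝ) (p q : MvPolynomial (Fin n) ℝ) :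
    Dop x (p - q) = Dop x p - Dop x q := by
  simp [Dop, map_sub, mul_sub, Finset.sum_sub_distrib]

lemma Dop_mul (x : Fin n → ℝ) (p q : MvPolynomial (Fin n) ℝ) :
    Dop x (p * q) = Dop x p * q + p * Dop x q := by
  rw [Dop, Dop, Dop, Finset.sum_mul, Finset.mul_sum, ← Finset.sum_add_distrib]
  refine Finset.sum_congr rfl (fun i _ => ?_)
  rw [pderiv_mul]
  ring

lemma Dop_one (x : Fin n → ℝ) : Dop x (1 : MvPolynomial (Fin n) ℝ) = 0 := by
  simp [Dop, pderiv_one]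

lemma Dop_L (x y : Fin n → ℝ) : Dop x (Lf y) = C (∑ i, x i * y i) := by
  rw [Dop, map_sum]
  exact Finset.sum_congr rfl (fun i _ => by rw [pderiv_Lf, ← C_mul])

lemma Dop_Sq (x : Fin n → ℝ) : Dop x (Sq n) = Lf x + Lf x := by
  rw [Dop, Lf, ← Finset.sum_add_distrib]
  exact Finset.sum_congr rfl (fun i _ => by rw [pderiv_Sq, mul_add])

lemma Lap_smul (c : ℝ) (p : MvPolynomial (Fin n) ℝ) : Lap (c • p) = c • Lap p := by
  simp [Lap, map_smul, Finset.smul_sum]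

lemma Lap_sub (p q : MvPolynomial (Fin n) ℝ) : Lap (p - q) = Lap p - Lap q := by
  simp [Lap, map_sub, Finset.sum_sub_distrib]

lemma Lap_one : Lap (1 : MvPolynomial (Fin n) ℝ) = 0 := by
  simp [Lap, pderiv_one]

lemma Lap_L (x : Fin n → ℝ) : Lap (Lf x) = 0 := by
  simp [Lap, pderiv_Lf, pderiv_C]

lemma Lap_L_mul (x : Fin n → ℝ) (h : MvPolynomial (Fin n) ℝ) :
    Lap (Lf x * h) = (Dop x h + Dop x h) + Lf x * Lap h := by
  have e : ∀ i, pderiv i (pderiv i (Lf x * h))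
      = (C (x i) * pderiv i h + C (x i) * pderiv i h) + Lf x * pderiv i (pderiv i h) := by
    intro i
    rw [pderiv_mul, pderiv_Lf, map_add, pderiv_mul, pderiv_mul, pderiv_C, pderiv_Lf]
    ring
  rw [Lap, Finset.sum_congr rfl (fun i _ => e i), Finset.sum_add_distrib,
    Finset.sum_add_distrib, ← Finset.mul_sum]
  rfl

lemma Lap_Sq_mul (k : ℕ) (h : MvPolynomial (Fin n) ℝ) (hh : h.IsHomogeneous k) :
    Lap (Sq n * h) = (2 * (n : ℝ) + 4 * (k : ℝ)) • h + Sq n * Lap h := by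
  have e : ∀ i, pderiv i (pderiv i (Sq n * h))
      = (h + h) + ((X i * pderiv i h + X i * pderiv i h)
          + (X i * pderiv i h + X i * pderiv i h)) + Sq n * pderiv i (pderiv i h) := by
    intro i
    rw [pderiv_mul, pderiv_Sq, map_add, pderiv_mul, pderiv_mul, pderiv_Sq,
      map_add, pderiv_X_self]
    ring
  rw [Lap, Finset.sum_congr rfl (fun i _ => e i), Finset.sum_add_distrib,
    Finset.sum_add_distrib, Finset.sum_add_distrib, Finset.sum_add_distrib,
    Finset.sum_add_distrib, ← Finset.mul_sum]
  rw [euler_identity k h hh, Finset.sum_const, Finset.card_univ, Fintype.card_fin]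
  have hn : (n : ℕ) • h = (n : ℝ) • h := (Nat.cast_smul_eq_nsmul ℝ n _).symm
  rw [hn]
  have : (∑ i, pderiv i (pderiv i h)) = Lap h := rfl
  rw [this]
  module

lemma isHomog_Dop (x : Fin n → ℝ) {p : MvPolynomial (Fin n) ℝ} {k : ℕ}
    (hp : p.IsHomogeneous (k + 1)) : (Dop x p).IsHomogeneous k :=
  IsHomogeneous.sum _ _ _ (fun i _ => (isHomogeneous_pderiv i hp).C_mul (x i))

lemma eval_Dop (y : Fin n → ℝ) {p : MvPolynomial (Fin n) ℝ} {k : ℕ}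
    (hp : p.IsHomogeneous k) : eval y (Dop y p) = (k : ℝ) * eval y p := by
  have h := congrArg (eval y) (euler_identity k p hp)
  rw [map_sum] at h
  simp only [eval_mul, eval_X, smul_eval] at h
  rw [Dop, map_sum]
  simp only [eval_mul, eval_C]
  exact h

lemma eval_homog_zero (y : Fin n → ℝ) {p : MvPolynomial (Fin n) ℝ}
    (hp : p.IsHomogeneous 0) : eval y p = p.coeff 0 := by
  have hs : p.support ⊆ {0} := by
    intro d hd
    have h1 := hp (MvPolynomial.mem_support_iff.mp hd)
    have e : (Finsupp.weight 1) d = d.degree := (DFunLike.congr_fun Finsupp.degree_eq_weight_one d).symm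
    rw [e, Finsupp.degree_eq_zero_iff] at h1
    simp [h1]
  rw [eval_eq, Finset.sum_subset hs (fun d _ hd => by
    rw [MvPolynomial.notMem_support_iff.mp hd, zero_mul])]
  rw [Finset.sum_singleton]
  simp

lemma FF_one_left' (p : MvPolynomial (Fin n) ℝ) : FF 1 p = p.coeff 0 := by
  have : (1 : MvPolynomial (Fin n) ℝ) = monomial 0 (1 : ℝ) := by
    rw [MvPolynomial.monomial_zero', MvPolynomial.C_1]
  rw [this, FF_monomial_left, wt_zero]
  ring

lemma FF_L_pow (y : Fin n → ℝ) :
    ∀ (k : ℕ) (p : MvPolynomial (Fin n) ℝ), p.IsHomogeneous k →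
      FF (Lf y ^ k) p = (k.factorial : ℝ) * eval y p := by
  intro k
  induction k with
  | zero =>
    intro p hp
    rw [pow_zero, FF_one_left', eval_homog_zero y hp]
    simp
  | succ k ih =>
    intro p hp
    rw [pow_succ', FF_L_mul, ih (Dop y p) (isHomog_Dop y hp), eval_Dop y hp,
      Nat.factorial_succ]
    push_cast
    ring


/-- zonal polynomial: homogenization of the Gegenbauer polynomial -/
noncomputable def Zp (n : ℕ) (x : Fin n → ℝ) : ℕ → MvPolynomial (Fin n) ℝ
  | 0 => 1
  | 1 => Lf x
  | (k + 2) => (1 / ((k : ℝ) + (n : ℝ) - 1)) • ((2 * (k : ℝ) + (n : ℝ)) • (Lf x * Zp n x (k + 1))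
      - ((k : ℝ) + 1) • (Sq n * Zp n x k))

noncomputable def gam (n : ℕ) : ℕ → ℝ
  | 0 => 1
  | 1 => 1
  | (k + 2) => gam n (k + 1) * (((k : ℝ) + (n : ℝ) - 1) / (2 * (k : ℝ) + (n : ℝ)))

variable (hn : 2 ≤ n)

lemma Zp_succ_succ (x : Fin n → ℝ) (k : ℕ) :
    Zp n x (k + 2) = (1 / ((k : ℝ) + (n : ℝ) - 1)) •
      ((2 * (k : ℝ) + (n : ℝ)) • (Lf x * Zp n x (k + 1))
        - ((k : ℝ) + 1) • (Sq n * Zp n x k)) := rfl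

lemma gegenbauer_succ_succ (k : ℕ) (t : ℝ) :
    gegenbauer n (k + 2) t = ((2 * ((k : ℝ) + 2) + (n : ℝ) - 4) * t * gegenbauer n (k + 1) t
        - (((k : ℝ) + 2) - 1) * gegenbauer n k t) / (((k : ℝ) + 2) + (n : ℝ) - 3) := rfl

include hn

lemma hnR : (2 : ℝ) ≤ (n : ℝ) := by exact_mod_cast hn

lemma den1_ne (k : ℕ) : (k : ℝ) + (n : ℝ) - 1 ≠ 0 := by
  have := hnR hn
  have : (0:ℝ) ≤ (k:ℝ) := Nat.cast_nonneg k
  nlinarith [hnR hn]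

lemma den2_ne (k : ℕ) : 2 * (k : ℝ) + (n : ℝ) ≠ 0 := by
  have : (0:ℝ) ≤ (k:ℝ) := Nat.cast_nonneg k
  nlinarith [hnR hn]

lemma gam_pos : ∀ k, 0 < gam n k := by
  intro k
  induction k using Nat.twoStepInduction with
  | zero => norm_num [gam]
  | one => norm_num [gam]
  | more k ih1 ih2 =>
    have h1 : (0:ℝ) < (k : ℝ) + (n : ℝ) - 1 := by
      have : (0:ℝ) ≤ (k:ℝ) := Nat.cast_nonneg k
      nlinarith [hnR hn]
    have h2 : (0:ℝ) < 2 * (k : ℝ) + (n : ℝ) := by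
      have : (0:ℝ) ≤ (k:ℝ) := Nat.cast_nonneg k
      nlinarith [hnR hn]
    show 0 < gam n (k + 1) * (((k : ℝ) + (n : ℝ) - 1) / (2 * (k : ℝ) + (n : ℝ)))
    exact mul_pos ih2 (div_pos h1 h2)

omit hn

lemma Lf_homog (x : Fin n → ℝ) : (Lf x).IsHomogeneous 1 :=
  IsHomogeneous.sum _ _ _ (fun i _ => (isHomogeneous_X ℝ i).C_mul (x i))

lemma Sq_homog : (Sq n).IsHomogeneous 2 :=
  IsHomogeneous.sum _ _ _ (fun i _ => (isHomogeneous_X ℝ i).mul (isHomogeneous_X ℝ i))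

lemma Zp_homog (x : Fin n → ℝ) : ∀ k, (Zp n x k).IsHomogeneous k := by
  intro k
  induction k using Nat.twoStepInduction with
  | zero => exact isHomogeneous_one _ _
  | one => exact Lf_homog x
  | more k ih1 ih2 =>
    rw [Zp_succ_succ]
    have h1 : (Lf x * Zp n x (k + 1)).IsHomogeneous (k + 2) := by
      have := (Lf_homog x).mul ih2
      rwa [show 1 + (k + 1) = k + 2 by omega] at this
    have h2 : (Sq n * Zp n x k).IsHomogeneous (k + 2) := by
      have := (Sq_homog).mul ih1
      rwa [show 2 + k = k + 2 by omega] at this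
    rw [smul_eq_C_mul]
    refine IsHomogeneous.C_mul ?_ _
    refine IsHomogeneous.sub ?_ ?_
    · rw [smul_eq_C_mul]; exact h1.C_mul _
    · rw [smul_eq_C_mul]; exact h2.C_mul _

include hn

lemma Dop_Z (x : Fin n → ℝ) (hx : ∑ i, x i * x i = 1) :
    ∀ k, Dop x (Zp n x (k + 1)) = ((k : ℝ) + 1) • Zp n x k := by
  intro k
  induction k using Nat.twoStepInduction with
  | zero =>
    rw [show Zp n x (0 + 1) = Lf x from rfl, Dop_L, hx, C_1]
    norm_num [Zp]
  | one =>
    show Dop x (Zp n x (0 + 2)) = (((1 : ℕ) : ℝ) + 1) • Zp n x 1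
    have hZ1 : Zp n x (0 + 1) = Lf x := rfl
    have hZ0 : Zp n x 0 = (1 : MvPolynomial (Fin n) ℝ) := rfl
    rw [Zp_succ_succ x 0, hZ1, hZ0, Dop_smul, Dop_sub, Dop_smul, Dop_smul, Dop_mul, Dop_mul,
      Dop_L, hx, C_1, Dop_Sq, Dop_one]
    have h1 : (n : ℝ) - 1 ≠ 0 := by
      have := den1_ne hn 0
      push_cast at this
      intro h; exact this (by linarith)
    push_cast
    simp only [mul_one, one_mul, mul_zero, add_zero, mul_smul_comm, add_mul]
    match_scalars <;> field_simp [h1] <;> ring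
  | more k ih1 ih2 =>
    have hZ : Zp n x (k + 1 + 1) = Zp n x (k + 2) := rfl
    show Dop x (Zp n x ((k + 1) + 2)) = (((k + 2 : ℕ) : ℝ) + 1) • Zp n x (k + 2)
    rw [Zp_succ_succ x (k + 1), Dop_smul, Dop_sub, Dop_smul, Dop_smul, Dop_mul, Dop_mul,
      Dop_L, hx, C_1, Dop_Sq, ih1, ih2, hZ, Zp_succ_succ x k]
    have h1 : (k : ℝ) + (n : ℝ) - 1 ≠ 0 := den1_ne hn k
    have h2 : (k : ℝ) + 1 + (n : ℝ) - 1 ≠ 0 := by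
      intro h; exact (den1_ne hn (k + 1)) (by push_cast; linarith)
    push_cast
    simp only [mul_one, one_mul, mul_zero, add_zero, mul_smul_comm, add_mul, smul_sub,
      smul_smul, mul_sub, mul_add]
    match_scalars <;> field_simp <;> ring

lemma Lap_Z (x : Fin n → ℝ) (hx : ∑ i, x i * x i = 1) :
    ∀ k, Lap (Zp n x k) = 0 := by
  intro k
  induction k using Nat.twoStepInduction with
  | zero => exact Lap_one
  | one => exact Lap_L x
  | more k ih1 ih2 =>
    rw [Zp_succ_succ, Lap_smul, Lap_sub, Lap_smul, Lap_smul, Lap_L_mul,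
      Lap_Sq_mul k _ (Zp_homog x k), ih1, ih2, Dop_Z hn x hx k]
    simp only [mul_zero, add_zero]
    have h1 : (k : ℝ) + (n : ℝ) - 1 ≠ 0 := den1_ne hn k
    match_scalars <;> field_simp <;> try ring
    all_goals tauto

omit hn

lemma eval_Lf (x y : Fin n → ℝ) : eval y (Lf x) = ∑ i, x i * y i := by
  rw [Lf, map_sum]
  exact Finset.sum_congr rfl (fun i _ => by rw [eval_mul, eval_C, eval_X])

lemma eval_Sq (y : Fin n → ℝ) : eval y (Sq n) = ∑ i, y i * y i := by
  rw [Sq, map_sum]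
  exact Finset.sum_congr rfl (fun i _ => by rw [eval_mul, eval_X])

include hn

lemma Zp_eval (x y : Fin n → ℝ) (hy : ∑ i, y i * y i = 1) :
    ∀ k, eval y (Zp n x k) = gegenbauer n k (∑ i, x i * y i) := by
  intro k
  induction k using Nat.twoStepInduction with
  | zero =>
    rw [show Zp n x 0 = (1 : MvPolynomial (Fin n) ℝ) from rfl,
      show gegenbauer n 0 (∑ i, x i * y i) = 1 from rfl]
    simp
  | one => rw [show Zp n x 1 = Lf x from rfl, eval_Lf]; rfl
  | more k ih1 ih2 =>
    rw [Zp_succ_succ x k, gegenbauer_succ_succ, smul_eval, map_sub, smul_eval, smul_eval,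
      eval_mul, eval_mul, eval_Lf, eval_Sq, hy, ih1, ih2]
    have h1 : (k : ℝ) + (n : ℝ) - 1 ≠ 0 := den1_ne hn k
    have h2 : ((k : ℝ) + 2) + (n : ℝ) - 3 ≠ 0 := by intro h; exact h1 (by linarith)
    field_simp
    ring

lemma gegenbauer_at_one : ∀ k, gegenbauer n k 1 = 1 := by
  intro k
  induction k using Nat.twoStepInduction with
  | zero => rfl
  | one => rfl
  | more k ih1 ih2 =>
    rw [gegenbauer_succ_succ, ih1, ih2]
    have h2 : ((k : ℝ) + 2) + (n : ℝ) - 3 ≠ 0 := by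
      have h1 : (k : ℝ) + (n : ℝ) - 1 ≠ 0 := den1_ne hn k
      intro h; apply h1; linarith
    rw [div_eq_one_iff_eq h2]
    ring

lemma Zp_decomp (y : Fin n → ℝ) :
    ∀ k, ∃ r : MvPolynomial (Fin n) ℝ, Lf y ^ k = gam n k • Zp n y k + Sq n * r := by
  intro k
  induction k using Nat.twoStepInduction with
  | zero => exact ⟨0, by simp [gam, Zp]⟩
  | one => exact ⟨0, by simp [gam, Zp]⟩
  | more k ih1 ih2 =>
    obtain ⟨r, hr⟩ := ih2
    have h1 : (k : ℝ) + (n : ℝ) - 1 ≠ 0 := den1_ne hn k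
    have h2 : 2 * (k : ℝ) + (n : ℝ) ≠ 0 := den2_ne hn k
    have LZ : Lf y * Zp n y (k + 1)
        = (((k : ℝ) + (n : ℝ) - 1) / (2 * (k : ℝ) + (n : ℝ))) • Zp n y (k + 2)
          + (((k : ℝ) + 1) / (2 * (k : ℝ) + (n : ℝ))) • (Sq n * Zp n y k) := by
      rw [Zp_succ_succ]
      match_scalars <;> field_simp <;> ring
    refine ⟨(gam n (k + 1) * (((k : ℝ) + 1) / (2 * (k : ℝ) + (n : ℝ)))) • Zp n y k
      + Lf y * r, ?_⟩
    have step1 : Lf y ^ (k + 2) = Lf y * Lf y ^ (k + 1) := by rw [pow_succ']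
    rw [step1, hr, mul_add, mul_smul_comm, LZ,
      show Lf y * (Sq n * r) = Sq n * (Lf y * r) by ring,
      show gam n (k + 2) = gam n (k + 1) * (((k : ℝ) + (n : ℝ) - 1) / (2 * (k : ℝ) + (n : ℝ)))
        from rfl]
    rw [mul_add (Sq n), mul_smul_comm]
    module


omit hn

lemma FF_zero_right (p : MvPolynomial (Fin n) ℝ) : FF p 0 = 0 := by
  simp [FF]

include hn

lemma FF_Z_Z (x y : Fin n → ℝ) (hx : ∑ i, x i * x i = 1) (hy : ∑ i, y i * y i = 1) (k : ℕ) :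
    FF (Zp n y k) (Zp n x k)
      = ((k.factorial : ℝ) / gam n k) * gegenbauer n k (∑ i, x i * y i) := by
  obtain ⟨r, hr⟩ := Zp_decomp hn y k
  have h1 : FF (Lf y ^ k) (Zp n x k)
      = (k.factorial : ℝ) * gegenbauer n k (∑ i, x i * y i) := by
    rw [FF_L_pow y k _ (Zp_homog x k), Zp_eval hn x y hy k]
  rw [hr, FF_add_left, FF_smul_left, FF_Sq_mul, Lap_Z hn x hx k, FF_zero_right,
    add_zero] at h1
  have hg := (gam_pos hn k).ne'
  field_simp
  linarith [h1]

lemma geg_sum_nonneg (k : ℕ) (C : Finset (EuclideanSpace ℝ (Fin n)))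
    (hC : ∀ x ∈ C, ∑ i, x i * x i = 1) :
    0 ≤ ∑ x ∈ C, ∑ y ∈ C, gegenbauer n k (∑ i, x i * y i) := by
  have hg := (gam_pos hn k)
  have hf : (0:ℝ) < (k.factorial : ℝ) := by exact_mod_cast k.factorial_pos
  have key : ∀ x ∈ C, ∀ y ∈ C, gegenbauer n k (∑ i, x i * y i)
      = (gam n k / (k.factorial : ℝ)) * FF (Zp n y k) (Zp n x k) := by
    intro x hx y hy
    rw [FF_Z_Z hn x y (hC x hx) (hC y hy) k]
    field_simp
  rw [Finset.sum_congr rfl (fun x hx => Finset.sum_congr rfl (fun y hy => key x hx y hy))]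
  simp only [← Finset.mul_sum]
  have e : ∑ x ∈ C, ∑ y ∈ C, FF (Zp n y k) (Zp n x k)
      = FF (∑ z ∈ C, Zp n z k) (∑ z ∈ C, Zp n z k) := by
    rw [FF_sum_left, Finset.sum_comm]
    exact Finset.sum_congr rfl (fun y _ => by rw [FF_sum_right])
  rw [e]
  exact mul_nonneg (div_nonneg hg.le hf.le) (FF_nonneg _)

end DGS

/-- Delsarte–Goethals–Seidel LP bound for spherical two-distance sets: if `M` is the
(finite) optimal value of the LP `max 1 + α₁ + α₂` subject to
`1 + α₁ G_i(a) + α₂ G_i(b) ≥ 0` for `i = 0, …, p` and `α₁, α₂ ≥ 0`,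
then `|C| ≤ M`. -/
theorem stmt4 (n : ℕ) (hn : 2 ≤ n) (C : Finset (EuclideanSpace ℝ (Fin n)))
    (hC : ∀ x ∈ C, ‖x‖ = 1) (a b : ℝ) (ha : a < 1) (hb : b < 1)
    (hab : ∀ x ∈ C, ∀ y ∈ C, x ≠ y → ⟪x, y⟫ = a ∨ ⟪x, y⟫ = b)
    (p : ℕ) (hp : 1 ≤ p) (M : ℝ)
    (hM : ∀ α₁ α₂ : ℝ, 0 ≤ α₁ → 0 ≤ α₂ →
      (∀ i ≤ p, 0 ≤ 1 + α₁ * gegenbauer n i a + α₂ * gegenbauer n i b) →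
      1 + α₁ + α₂ ≤ M) :
    (C.card : ℝ) ≤ M := by
  classical
  have hinner : ∀ x y : EuclideanSpace ℝ (Fin n), ⟪x, y⟫ = ∑ i, x i * y i := by
    intro x y
    simp [PiLp.inner_apply, RCLike.inner_apply, conj_trivial]
    exact Finset.sum_congr rfl (fun i _ => mul_comm _ _)
  have hunit : ∀ x ∈ C, ∑ i, x i * x i = 1 := by
    intro x hx
    have h1 : ⟪x, x⟫ = ‖x‖ * ‖x‖ := real_inner_self_eq_norm_mul_norm x
    rw [hinner, hC x hx] at h1
    simpa using h1
  rcases Nat.eq_zero_or_pos C.card with h0 | h0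
  · have h1 := hM 0 0 le_rfl le_rfl (fun i _ => by norm_num)
    rw [h0]
    push_cast
    linarith
  have hm : (0:ℝ) < (C.card : ℝ) := by exact_mod_cast h0
  set m : ℝ := (C.card : ℝ) with hmdef
  set D := C.offDiag with hD
  set Da := D.filter (fun z => ⟪z.1, z.2⟫ = a) with hDa
  set Db := D.filter (fun z => ¬ (⟪z.1, z.2⟫ = a)) with hDb
  have hsplit : ∀ i : ℕ, (∑ x ∈ C, ∑ y ∈ C, gegenbauer n i (∑ j, x j * y j))
      = m + (Da.card : ℝ) * gegenbauer n i a + (Db.card : ℝ) * gegenbauer n i b := by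
    intro i
    rw [← Finset.sum_product']
    have e1 : (C ×ˢ C).filter (fun z => z.1 = z.2) = C.image (fun x => (x, x)) := by
      ext z
      simp only [Finset.mem_filter, Finset.mem_product, Finset.mem_image]
      constructor
      · rintro ⟨⟨h1, h2⟩, h3⟩
        exact ⟨z.1, h1, by rw [Prod.ext_iff]; exact ⟨rfl, h3⟩⟩
      · rintro ⟨w, hw, rfl⟩
        exact ⟨⟨hw, hw⟩, rfl⟩
    have e2 : (C ×ˢ C).filter (fun z => ¬ z.1 = z.2) = D := by
      ext z
      simp only [Finset.mem_filter, Finset.mem_product, hD, Finset.mem_offDiag]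
      tauto
    rw [← Finset.sum_filter_add_sum_filter_not (C ×ˢ C) (fun z => z.1 = z.2), e1, e2]
    have ediag : (∑ z ∈ C.image (fun x => (x, x)),
        gegenbauer n i (∑ j, z.1 j * z.2 j)) = m := by
      rw [Finset.sum_image (fun x _ y _ h => (Prod.ext_iff.mp h).1)]
      have he : ∀ x ∈ C, gegenbauer n i (∑ j, x j * x j) = 1 := fun x hx => by
        rw [hunit x hx]; exact DGS.gegenbauer_at_one hn i
      rw [Finset.sum_congr rfl he, Finset.sum_const, nsmul_eq_mul, mul_one]
    rw [ediag, ← Finset.sum_filter_add_sum_filter_not D (fun z => ⟪z.1, z.2⟫ = a)]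
    have eDa : (∑ z ∈ Da, gegenbauer n i (∑ j, z.1 j * z.2 j))
        = (Da.card : ℝ) * gegenbauer n i a := by
      have he : ∀ z ∈ Da, gegenbauer n i (∑ j, z.1 j * z.2 j) = gegenbauer n i a := by
        intro z hz
        have hz' := Finset.mem_filter.mp hz
        rw [← hinner z.1 z.2, hz'.2]
      rw [Finset.sum_congr rfl he, Finset.sum_const, nsmul_eq_mul]
    have eDb : (∑ z ∈ Db, gegenbauer n i (∑ j, z.1 j * z.2 j))
        = (Db.card : ℝ) * gegenbauer n i b := by
      have he : ∀ z ∈ Db, gegenbauer n i (∑ j, z.1 j * z.2 j) = gegenbauer n i b := by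
        intro z hz
        have hz' := Finset.mem_filter.mp hz
        have hzD := Finset.mem_offDiag.mp (hD ▸ hz'.1)
        have := hab z.1 hzD.1 z.2 hzD.2.1 hzD.2.2
        rcases this with h | h
        · exact absurd h hz'.2
        · rw [← hinner z.1 z.2, h]
      rw [Finset.sum_congr rfl he, Finset.sum_const, nsmul_eq_mul]
    rw [eDa, eDb]
    ring
  have hNa : (0:ℝ) ≤ (Da.card : ℝ)/m := div_nonneg (Nat.cast_nonneg _) hm.le
  have hNb : (0:ℝ) ≤ (Db.card : ℝ)/m := div_nonneg (Nat.cast_nonneg _) hm.le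
  have hcon : ∀ i ≤ p, 0 ≤ 1 + ((Da.card : ℝ)/m) * gegenbauer n i a
      + ((Db.card : ℝ)/m) * gegenbauer n i b := by
    intro i _
    have h1 := DGS.geg_sum_nonneg hn i C hunit
    rw [hsplit i] at h1
    have e : 1 + ((Da.card : ℝ)/m) * gegenbauer n i a + ((Db.card : ℝ)/m) * gegenbauer n i b
        = (m + (Da.card : ℝ) * gegenbauer n i a + (Db.card : ℝ) * gegenbauer n i b)/m := by
      field_simp
    rw [e]
    exact div_nonneg h1 hm.le
  have hfin := hM _ _ hNa hNb hcon
  have hcard : (Da.card : ℝ) + (Db.card : ℝ) = m * m - m := by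
    have h1 : Da.card + Db.card = D.card :=
      Finset.card_filter_add_card_filter_not _
    have h2 : D.card = C.card * C.card - C.card := by
      rw [hD]; exact Finset.offDiag_card C
    have h3 : C.card ≤ C.card * C.card := Nat.le_mul_of_pos_left _ h0
    have h4 : ((Da.card + Db.card : ℕ) : ℝ) = ((C.card * C.card - C.card : ℕ) : ℝ) := by
      rw [h1, h2]
    rw [Nat.cast_sub h3] at h4
    push_cast at h4
    push_cast
    linarith [h4]
  have heval : 1 + (Da.card : ℝ)/m + (Db.card : ℝ)/m = m := by
    field_simp
    linarith [hcard]
  linarith [hfin, heval]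
end

section
/- Let C be a spherical two-distance set in ℝ^n with inner product values a and b, a > b. If |C| ≥ 2n+3, then (1−b)/(a−b) is an integer k satisfying 2 ≤ k ≤ ⌊(1+√(2n))/2⌋; equivalently b = (ka−1)/(k−1) for such an integer k. -/
open RealInnerProductSpace Polynomial Matrix

section auxs

lemma aux_minpoly_pow_dvd {α : ℝ} (hint : IsIntegral ℚ α) :
    ∀ (M : ℕ) (p : ℚ[X]), p ≠ 0 → M ≤ (p.map (algebraMap ℚ ℝ)).rootMultiplicity α →
      minpoly ℚ α ^ M ∣ p := by
  intro M
  induction M with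
  | zero => intro p _ _; simpa using one_dvd p
  | succ M ih =>
    intro p hp hle
    have hmapne : p.map (algebraMap ℚ ℝ) ≠ 0 :=
      (Polynomial.map_ne_zero_iff (algebraMap ℚ ℝ).injective).mpr hp
    have hroot : (p.map (algebraMap ℚ ℝ)).IsRoot α :=
      (Polynomial.rootMultiplicity_pos hmapne).mp (by omega)
    have haev : Polynomial.aeval α p = 0 := by
      rw [Polynomial.aeval_def, Polynomial.eval₂_eq_eval_map]; exact hroot
    obtain ⟨q, hq⟩ := minpoly.dvd ℚ α haev
    have hqne : q ≠ 0 := by rintro rfl; rw [mul_zero] at hq; exact hp hq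
    have hsep : (minpoly ℚ α).Separable := (minpoly.irreducible hint).separable
    have hsepmap : ((minpoly ℚ α).map (algebraMap ℚ ℝ)).Separable := hsep.map
    have hμmapne : (minpoly ℚ α).map (algebraMap ℚ ℝ) ≠ 0 :=
      (Polynomial.map_ne_zero_iff (algebraMap ℚ ℝ).injective).mpr (minpoly.ne_zero hint)
    have hqmapne : q.map (algebraMap ℚ ℝ) ≠ 0 :=
      (Polynomial.map_ne_zero_iff (algebraMap ℚ ℝ).injective).mpr hqne
    have hmul : p.map (algebraMap ℚ ℝ) =
        (minpoly ℚ α).map (algebraMap ℚ ℝ) * q.map (algebraMap ℚ ℝ) := by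
      rw [hq, Polynomial.map_mul]
    have hrm : (p.map (algebraMap ℚ ℝ)).rootMultiplicity α =
        ((minpoly ℚ α).map (algebraMap ℚ ℝ)).rootMultiplicity α +
          (q.map (algebraMap ℚ ℝ)).rootMultiplicity α := by
      rw [hmul]; exact Polynomial.rootMultiplicity_mul (by rw [← hmul]; exact hmapne)
    have h1 : ((minpoly ℚ α).map (algebraMap ℚ ℝ)).rootMultiplicity α ≤ 1 := by
      rw [Polynomial.rootMultiplicity_le_iff hμmapne]
      intro hdvd
      have hsq := hsepmap.squarefree
      have := hsq (X - C α) (by rwa [← sq])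
      exact Polynomial.not_isUnit_X_sub_C α this
    have h2 : M ≤ (q.map (algebraMap ℚ ℝ)).rootMultiplicity α := by omega
    obtain ⟨r, hr⟩ := ih q hqne h2
    exact ⟨r, by rw [hq, hr, pow_succ]; ring⟩

lemma aux_charpoly_dvd {V : Type*} [AddCommGroup V] [Module ℝ V] [FiniteDimensional ℝ V]
    (f : V →ₗ[ℝ] V) (W : Submodule ℝ V) (α : ℝ) (hW : ∀ v ∈ W, f v = α • v) :
    (X - C α) ^ (Module.finrank ℝ W) ∣ LinearMap.charpoly f := by
  classical
  obtain ⟨U, hU⟩ := Submodule.exists_isCompl W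
  let bW := Module.finBasis ℝ W
  let bU := Module.finBasis ℝ U
  let e := Submodule.prodEquivOfIsCompl W U hU
  let bb := (bW.prod bU).map e
  have hbbinl : ∀ i, bb (Sum.inl i) = (bW i : V) := by
    intro i
    simp only [bb, Module.Basis.map_apply, Module.Basis.prod_apply]
    simp [e, Submodule.coe_prodEquivOfIsCompl]
  have hf : ∀ i, f (bb (Sum.inl i)) = α • bb (Sum.inl i) := by
    intro i; rw [hbbinl i]; exact hW _ (bW i).2
  let M := LinearMap.toMatrix bb bb f
  have hM11 : M.toBlocks₁₁ = α • (1 : Matrix (Fin (Module.finrank ℝ W)) (Fin (Module.finrank ℝ W)) ℝ) := by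
    ext i j
    simp only [Matrix.toBlocks₁₁, M, LinearMap.toMatrix_apply, Matrix.of_apply]
    rw [hf j, _root_.map_smul]
    simp [Module.Basis.repr_self, Finsupp.single_apply, Matrix.one_apply, eq_comm]
  have hM21 : M.toBlocks₂₁ = 0 := by
    ext i j
    simp only [Matrix.toBlocks₂₁, M, LinearMap.toMatrix_apply, Matrix.of_apply]
    rw [hf j, _root_.map_smul]
    simp [Module.Basis.repr_self, Finsupp.single_apply]
  have hMblocks : M = Matrix.fromBlocks (α • 1) M.toBlocks₁₂ 0 M.toBlocks₂₂ := by
    rw [← hM11, ← hM21, Matrix.fromBlocks_toBlocks]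
  have hcp : LinearMap.charpoly f = M.charpoly := (LinearMap.charpoly_toMatrix f bb).symm
  have hscal : (α • (1 : Matrix (Fin (Module.finrank ℝ W)) (Fin (Module.finrank ℝ W)) ℝ)).charpoly
      = (X - C α) ^ (Module.finrank ℝ W) := by
    have hd : (α • (1 : Matrix (Fin (Module.finrank ℝ W)) (Fin (Module.finrank ℝ W)) ℝ)) =
        Matrix.diagonal (fun _ => α) := by
      ext i j
      by_cases h : i = j <;> simp [h, Matrix.one_apply, Matrix.diagonal]
    have hcm : (Matrix.diagonal (fun _ : Fin (Module.finrank ℝ W) => α)).charmatrix =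
        Matrix.diagonal (fun _ => (X : ℝ[X]) - C α) := by
      ext i j
      by_cases h : i = j
      · subst h; rw [Matrix.charmatrix_apply_eq]; simp
      · rw [Matrix.charmatrix_apply_ne _ _ _ h]; simp [Matrix.diagonal_apply_ne _ h, h]
    rw [hd, Matrix.charpoly, hcm, Matrix.det_diagonal]
    simp
  rw [hcp, hMblocks, Matrix.charpoly_fromBlocks_zero₂₁, hscal]
  exact Dvd.intro _ rfl
lemma aux_trace_ineq {ι : Type*} [Fintype ι] [DecidableEq ι]
    (D Q : Matrix ι ι ℝ) (c m N : ℝ)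
    (hDsym : Dᵀ = D) (hQsym : Qᵀ = Q)
    (hD2 : (D * D).trace = N * (N - 1)) (hDtr : D.trace = 0)
    (hQ2 : (Q * Q).trace = m) (hQtr : Q.trace = m) (hDQ : (D * Q).trace = -(c * m))
    (htr1 : (1 : Matrix ι ι ℝ).trace = N)
    (hm0 : 0 ≤ m) (hmN : m < N) :
    c ^ 2 * m ≤ (N - 1) * (N - m) := by
  set q : ℝ := N - m with hqdef
  have hq : 0 < q := by simp [hqdef]; linarith
  have hN0 : 0 < N := by linarith
  set t : ℝ := c * m / q with htdef
  set u : ℝ := c + t with hudef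
  set Z : Matrix ι ι ℝ := D + u • Q - t • 1 with hZdef
  have hZsym : Zᵀ = Z := by
    rw [hZdef, Matrix.transpose_sub, Matrix.transpose_add, Matrix.transpose_smul,
      Matrix.transpose_smul, Matrix.transpose_one, hDsym, hQsym]
  have h0 : 0 ≤ (Z * Z).trace := by
    have : (Z * Z).trace = ∑ x : ι, ∑ y : ι, (Z x y) ^ 2 := by
      rw [Matrix.trace]
      apply Finset.sum_congr rfl
      intro x _
      rw [Matrix.diag_apply, Matrix.mul_apply]
      apply Finset.sum_congr rfl
      intro y _
      have hyx : Z y x = Z x y := by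
        conv_lhs => rw [← hZsym, Matrix.transpose_apply]
      rw [hyx]; ring
    rw [this]
    exact Finset.sum_nonneg fun x _ => Finset.sum_nonneg fun y _ => sq_nonneg _
  have hexp : (Z * Z).trace = N * (N - 1) - 2 * u * (c * m) + u ^ 2 * m - 2 * u * t * m
      + t ^ 2 * N := by
    rw [hZdef]
    simp only [Matrix.sub_mul, Matrix.mul_sub, Matrix.add_mul, Matrix.mul_add,
      Matrix.smul_mul, Matrix.mul_smul, Matrix.one_mul, Matrix.mul_one, smul_smul,
      Matrix.trace_sub, Matrix.trace_add, Matrix.trace_smul, smul_eq_mul]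
    rw [Matrix.trace_mul_comm Q D]
    rw [hD2, hDtr, hQ2, hQtr, hDQ, htr1]
    ring
  have h1 : 0 ≤ N * (N - 1) - m * (c + t) ^ 2 + t ^ 2 * N := by
    have := h0
    rw [hexp] at this
    rw [hudef] at this
    nlinarith [this]
  have ht : t * q = c * m := by
    rw [htdef]; field_simp
  have h2 : 0 ≤ (N * (N - 1) - m * (c + t) ^ 2 + t ^ 2 * N) * q ^ 2 :=
    mul_nonneg h1 (sq_nonneg q)
  have hqm : q + m = N := by rw [hqdef]; ring
  have e1 : (N * (N - 1) - m * (c + t) ^ 2 + t ^ 2 * N) * q ^ 2 =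
      N * (N - 1) * q ^ 2 - m * (c * q + t * q) ^ 2 + (t * q) ^ 2 * N := by ring
  rw [e1, ht] at h2
  have e2 : c * q + c * m = c * N := by rw [← hqm]; ring
  rw [e2] at h2
  have e3 : N * (N - 1) * q ^ 2 - m * (c * N) ^ 2 + (c * m) ^ 2 * N =
      N * q * ((N - 1) * q - c ^ 2 * m) := by rw [← hqm]; ring
  rw [e3] at h2
  by_contra hcon
  push_neg at hcon
  have hcon' : (N - 1) * q < c ^ 2 * m := hcon
  nlinarith [h2, mul_pos (mul_pos hN0 hq) (sub_pos.mpr hcon')]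
end auxs

set_option maxHeartbeats 1000000 in
/-- Larman–Rogers–Seidel theorem. -/
theorem stmt7 (n : ℕ) (C : Finset (EuclideanSpace ℝ (Fin n)))
    (hC : ∀ x ∈ C, ‖x‖ = 1) (a b : ℝ) (hba : b < a)
    (h2 : ∀ x ∈ C, ∀ y ∈ C, x ≠ y → ⟪x, y⟫ = a ∨ ⟪x, y⟫ = b)
    (hatt_a : ∃ x ∈ C, ∃ y ∈ C, x ≠ y ∧ ⟪x, y⟫ = a)
    (hatt_b : ∃ x ∈ C, ∃ y ∈ C, x ≠ y ∧ ⟪x, y⟫ = b)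
    (hcard : 2 * n + 3 ≤ C.card) :
    ∃ k : ℕ, 2 ≤ k ∧ (k : ℝ) ≤ (1 + Real.sqrt (2 * n)) / 2 ∧
      (1 - b) / (a - b) = (k : ℝ) ∧ b = ((k : ℝ) * a - 1) / ((k : ℝ) - 1) := by
  classical
  obtain ⟨xa, hxa, ya, hya, hxya, hab_a⟩ := hatt_a
  by_cases hn0 : n = 0
  · exfalso
    apply hxya
    subst hn0
    ext i
    exact i.elim0
  have hn : 1 ≤ n := Nat.one_le_iff_ne_zero.mpr hn0
  set ι := {x : EuclideanSpace ℝ (Fin n) // x ∈ C} with hι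
  set Nn : ℕ := C.card with hNn
  have hcardι : Fintype.card ι = Nn := Fintype.card_coe C
  have hab : (0:ℝ) < a - b := sub_pos.mpr hba
  have habne : a - b ≠ 0 := ne_of_gt hab
  have ha1 : a < 1 := by
    have hle : a ≤ 1 := by
      have h := real_inner_le_norm xa ya
      rw [hC xa hxa, hC ya hya, hab_a] at h
      linarith
    rcases lt_or_eq_of_le hle with h | h
    · exact h
    · exact absurd ((inner_eq_one_iff_of_norm_eq_one (hC xa hxa) (hC ya hya)).mp
        (by rw [hab_a, h])) hxya
  set k : ℝ := (1 - b) / (a - b) with hkdef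
  have hk1 : 1 < k := by
    rw [hkdef, lt_div_iff₀ hab]
    linarith
  have hself : ∀ x : ι, ⟪(x : EuclideanSpace ℝ (Fin n)), (x : EuclideanSpace ℝ (Fin n))⟫ = 1 := by
    intro x
    rw [real_inner_self_eq_norm_mul_norm, hC _ x.2]
    norm_num
  have h2' : ∀ x y : ι, x ≠ y →
      ⟪(x : EuclideanSpace ℝ (Fin n)), (y : EuclideanSpace ℝ (Fin n))⟫ = a ∨
      ⟪(x : EuclideanSpace ℝ (Fin n)), (y : EuclideanSpace ℝ (Fin n))⟫ = b := by
    intro x y hxy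
    exact h2 _ x.2 _ y.2 (fun h => hxy (Subtype.ext h))
  -- key vanishing sums
  have hkey : ∀ v : ι → ℝ, (∑ x : ι, v x • (x : EuclideanSpace ℝ (Fin n))) = 0 →
      (∑ x : ι, v x) = 0 → ∀ x : ι,
      ∑ y : ι, ⟪(x : EuclideanSpace ℝ (Fin n)), (y : EuclideanSpace ℝ (Fin n))⟫ * v y = 0 := by
    intro v h1 h2s x
    have h3 : ⟪(x : EuclideanSpace ℝ (Fin n)), ∑ y : ι, v y • (y : EuclideanSpace ℝ (Fin n))⟫
        = 0 := by rw [h1]; exact inner_zero_right _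
    rw [inner_sum] at h3
    simp only [real_inner_smul_right] at h3
    calc ∑ y : ι, ⟪(x : EuclideanSpace ℝ (Fin n)), (y : EuclideanSpace ℝ (Fin n))⟫ * v y
        = ∑ y : ι, v y * ⟪(x : EuclideanSpace ℝ (Fin n)), (y : EuclideanSpace ℝ (Fin n))⟫ := by
          apply Finset.sum_congr rfl; intros; ring
      _ = 0 := h3
  -- matrices
  set D : Matrix ι ι ℝ := Matrix.of (fun x y : ι =>
    if x = y then 0 else 2 * (⟪(x : EuclideanSpace ℝ (Fin n)), (y : EuclideanSpace ℝ (Fin n))⟫ - b) / (a - b) - 1) with hDdef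
  have hDapp : ∀ x y : ι, D x y =
      if x = y then 0 else 2 * (⟪(x : EuclideanSpace ℝ (Fin n)), (y : EuclideanSpace ℝ (Fin n))⟫ - b) / (a - b) - 1 :=
    fun x y => rfl
  have hDsym : Dᵀ = D := by
    ext x y
    rw [Matrix.transpose_apply, hDapp, hDapp]
    by_cases h : x = y
    · simp [h]
    · simp only [if_neg h, if_neg (Ne.symm h)]
      rw [real_inner_comm]
  have hDmul : ∀ v : ι → ℝ, (∑ x : ι, v x • (x : EuclideanSpace ℝ (Fin n))) = 0 →
      (∑ x : ι, v x) = 0 → D *ᵥ v = (-(2 * k - 1)) • v := by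
    intro v h1 h2s
    funext x
    have hterm : ∀ y : ι, D x y * v y =
        (2 / (a - b)) * (⟪(x : EuclideanSpace ℝ (Fin n)), (y : EuclideanSpace ℝ (Fin n))⟫ * v y)
        - (2 * b / (a - b) + 1) * v y - (if y = x then (2 * k - 1) * v y else 0) := by
      intro y
      by_cases hxy : y = x
      · subst hxy
        rw [hDapp, if_pos rfl, hself y, if_pos rfl, hkdef]
        field_simp
        ring
      · rw [hDapp, if_neg (Ne.symm hxy), if_neg hxy]
        field_simp
        ring
    have hmv : (D *ᵥ v) x = ∑ y : ι, D x y * v y := rfl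
    rw [Pi.smul_apply, smul_eq_mul, hmv, Finset.sum_congr rfl (fun y _ => hterm y),
      Finset.sum_sub_distrib, Finset.sum_sub_distrib, ← Finset.mul_sum, ← Finset.mul_sum,
      hkey v h1 h2s x, h2s, Finset.sum_ite_eq' Finset.univ x (fun y => (2 * k - 1) * v y)]
    simp
    ring
  set Az : Matrix ι ι ℤ := Matrix.of (fun x y : ι =>
    if x = y then 0 else
      if ⟪(x : EuclideanSpace ℝ (Fin n)), (y : EuclideanSpace ℝ (Fin n))⟫ = a then 1 else 0) with hAzdef
  set A : Matrix ι ι ℝ := Az.map (Int.castRingHom ℝ) with hAdef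
  have hAapp : ∀ x y : ι, A x y =
      if x = y then 0 else
        if ⟪(x : EuclideanSpace ℝ (Fin n)), (y : EuclideanSpace ℝ (Fin n))⟫ = a then 1 else 0 := by
    intro x y
    rw [hAdef, Matrix.map_apply, hAzdef]
    simp only [Matrix.of_apply]
    split_ifs <;> norm_num
  have hAmul : ∀ v : ι → ℝ, (∑ x : ι, v x • (x : EuclideanSpace ℝ (Fin n))) = 0 →
      (∑ x : ι, v x) = 0 → A *ᵥ v = (-k) • v := by
    intro v h1 h2s
    funext x
    have hterm : ∀ y : ι, A x y * v y =
        (1 / (a - b)) * (⟪(x : EuclideanSpace ℝ (Fin n)), (y : EuclideanSpace ℝ (Fin n))⟫ * v y)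
        - (b / (a - b)) * v y - (if y = x then k * v y else 0) := by
      intro y
      by_cases hxy : y = x
      · subst hxy
        rw [hAapp, if_pos rfl, hself y, if_pos rfl, hkdef]
        field_simp
        try ring
      · rw [hAapp, if_neg (Ne.symm hxy), if_neg hxy]
        rcases h2' x y (fun h => hxy (h.symm)) with hv | hv
        · rw [hv, if_pos rfl]
          field_simp
          try ring
        · rw [hv, if_neg (by intro h; exact (ne_of_lt hba) h)]
          field_simp
          try ring
    have hmv : (A *ᵥ v) x = ∑ y : ι, A x y * v y := rfl
    rw [Pi.smul_apply, smul_eq_mul, hmv, Finset.sum_congr rfl (fun y _ => hterm y),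
      Finset.sum_sub_distrib, Finset.sum_sub_distrib, ← Finset.mul_sum, ← Finset.mul_sum,
      hkey v h1 h2s x, h2s, Finset.sum_ite_eq' Finset.univ x (fun y => k * v y)]
    simp
  -- subspace of affine dependencies, Euclidean version
  let LE : EuclideanSpace ℝ ι →ₗ[ℝ] (EuclideanSpace ℝ (Fin n)) × ℝ :=
    { toFun := fun v => (∑ x : ι, v x • (x : EuclideanSpace ℝ (Fin n)), ∑ x : ι, v x)
      map_add' := by
        intro v w
        have h1 : ∑ x : ι, ((v + w) x) • (x : EuclideanSpace ℝ (Fin n))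
            = (∑ x : ι, v x • (x : EuclideanSpace ℝ (Fin n)))
              + ∑ x : ι, w x • (x : EuclideanSpace ℝ (Fin n)) := by
          rw [← Finset.sum_add_distrib]
          exact Finset.sum_congr rfl fun x _ => by rw [PiLp.add_apply, add_smul]
        have h2 : ∑ x : ι, (v + w) x = (∑ x : ι, v x) + ∑ x : ι, w x := by
          rw [← Finset.sum_add_distrib]
          exact Finset.sum_congr rfl fun x _ => by rw [PiLp.add_apply]
        simp only [h1, h2, Prod.mk_add_mk]
      map_smul' := by
        intro c v
        have h1 : ∑ x : ι, ((c • v) x) • (x : EuclideanSpace ℝ (Fin n))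
            = c • ∑ x : ι, v x • (x : EuclideanSpace ℝ (Fin n)) := by
          rw [Finset.smul_sum]
          exact Finset.sum_congr rfl fun x _ => by
            rw [PiLp.smul_apply, smul_eq_mul, mul_smul]
        have h2 : ∑ x : ι, (c • v) x = c * ∑ x : ι, v x := by
          rw [Finset.mul_sum]
          exact Finset.sum_congr rfl fun x _ => by rw [PiLp.smul_apply, smul_eq_mul]
        simp only [h1, h2, RingHom.id_apply, Prod.smul_mk, smul_eq_mul] }
  set Wsub : Submodule ℝ (EuclideanSpace ℝ ι) := LinearMap.ker LE with hWsubdef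
  set m : ℕ := Module.finrank ℝ Wsub with hmdef
  have hfrE : Module.finrank ℝ (EuclideanSpace ℝ ι) = Nn := by
    rw [finrank_euclideanSpace, hcardι]
  have hm_low : Nn ≤ m + (n + 1) := by
    have h := LinearMap.finrank_range_add_finrank_ker LE
    rw [hfrE, ← hWsubdef, ← hmdef] at h
    have h2r : Module.finrank ℝ (LinearMap.range LE) ≤ n + 1 := by
      have h3 := Submodule.finrank_le (LinearMap.range LE)
      rw [Module.finrank_prod, finrank_euclideanSpace_fin, Module.finrank_self] at h3
      omega
    omega
  have hm_up : m < Nn := by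
    have hne : Wsub ≠ ⊤ := by
      intro htop
      have hone : (WithLp.toLp 2 (fun _ => (1:ℝ)) : EuclideanSpace ℝ ι) ∈ Wsub := by rw [htop]; trivial
      have hk0 := LinearMap.mem_ker.mp hone
      have h2c : (∑ x : ι, (1:ℝ)) = 0 := congrArg Prod.snd hk0
      rw [Finset.sum_const, Finset.card_univ, hcardι] at h2c
      simp only [nsmul_eq_mul, mul_one, Nat.cast_eq_zero] at h2c
      omega
    have := Submodule.finrank_lt (K := ℝ) (V := EuclideanSpace ℝ ι) hne
    rw [hfrE] at this
    exact this
  -- orthonormal basis of Wsub and the projection matrix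
  let ob := stdOrthonormalBasis ℝ Wsub
  let Wm : Matrix ι (Fin m) ℝ := Matrix.of (fun x i => ((ob i : EuclideanSpace ℝ ι) x))
  have hWcol : ∀ i : Fin m,
      (∑ x : ι, ((ob i : EuclideanSpace ℝ ι) x) • (x : EuclideanSpace ℝ (Fin n))) = 0 ∧
      (∑ x : ι, ((ob i : EuclideanSpace ℝ ι) x)) = 0 := by
    intro i
    have hk0 := LinearMap.mem_ker.mp (ob i).2
    exact ⟨congrArg Prod.fst hk0, congrArg Prod.snd hk0⟩
  have hortho : Wmᵀ * Wm = 1 := by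
    ext i j
    rw [Matrix.mul_apply]
    have h := orthonormal_iff_ite.mp ob.orthonormal i j
    have hco : ⟪(ob i : EuclideanSpace ℝ ι), (ob j : EuclideanSpace ℝ ι)⟫
        = ∑ x : ι, ((ob i : EuclideanSpace ℝ ι) x) * ((ob j : EuclideanSpace ℝ ι) x) := by
      rw [PiLp.inner_apply]
      exact Finset.sum_congr rfl fun x _ => by
        simp [RCLike.inner_apply, starRingEnd_apply]
        exact mul_comm _ _
    rw [Submodule.coe_inner] at h
    rw [hco] at h
    rw [Matrix.one_apply]
    rw [← h]
    exact Finset.sum_congr rfl fun x _ => rfl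
  set Q : Matrix ι ι ℝ := Wm * Wmᵀ with hQdef
  have hQsym : Qᵀ = Q := by
    rw [hQdef, Matrix.transpose_mul, Matrix.transpose_transpose]
  have hQQ : Q * Q = Q := by
    rw [hQdef, Matrix.mul_assoc, ← Matrix.mul_assoc Wmᵀ Wm Wmᵀ, hortho, Matrix.one_mul]
  have htrQ : Q.trace = (m:ℝ) := by
    rw [hQdef, Matrix.trace_mul_comm, hortho, Matrix.trace_one]
    simp
  have htrQ2 : (Q * Q).trace = (m:ℝ) := by rw [hQQ, htrQ]
  have htrD : D.trace = 0 := by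
    rw [Matrix.trace]
    apply Finset.sum_eq_zero
    intro x _
    rw [Matrix.diag_apply, hDapp, if_pos rfl]
  have hDW : D * Wm = (-(2 * k - 1)) • Wm := by
    ext x i
    have hcol := hDmul (fun y => Wm y i) (hWcol i).1 (hWcol i).2
    have hx := congrFun hcol x
    rw [Pi.smul_apply, smul_eq_mul] at hx
    rw [Matrix.mul_apply, Matrix.smul_apply, smul_eq_mul]
    exact hx
  have htrDQ : (D * Q).trace = -((2 * k - 1) * (m:ℝ)) := by
    rw [hQdef, ← Matrix.mul_assoc, hDW, Matrix.smul_mul, Matrix.trace_smul, ← hQdef, htrQ]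
    simp only [smul_eq_mul]
    ring
  have htrD2 : (D * D).trace = (Nn:ℝ) * ((Nn:ℝ) - 1) := by
    have hdiag : ∀ x : ι, (D * D) x x = ((Nn:ℝ) - 1) := by
      intro x
      rw [Matrix.mul_apply]
      have hterm : ∀ y : ι, D x y * D y x = if x = y then 0 else 1 := by
        intro y
        have hyx : D y x = D x y := by conv_lhs => rw [← hDsym, Matrix.transpose_apply]
        rw [hyx]
        by_cases h : x = y
        · rw [hDapp, if_pos h]; simp [h]
        · rw [hDapp, if_neg h, if_neg h]
          rcases h2' x y h with hv | hv
          · rw [hv]; field_simp; ring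
          · rw [hv, sub_self, mul_zero, zero_div, zero_sub]; norm_num
      have halt : ∀ y : ι, (if x = y then (0:ℝ) else 1) = 1 - (if x = y then 1 else 0) := by
        intro y; split_ifs <;> ring
      rw [Finset.sum_congr rfl (fun y _ => hterm y), Finset.sum_congr rfl (fun y _ => halt y),
        Finset.sum_sub_distrib, Finset.sum_const, Finset.card_univ, hcardι,
        Finset.sum_ite_eq Finset.univ x (fun _ => (1:ℝ)), if_pos (Finset.mem_univ x)]
      simp
    rw [Matrix.trace]
    simp only [Matrix.diag_apply]
    rw [Finset.sum_congr rfl (fun x _ => hdiag x), Finset.sum_const, Finset.card_univ, hcardι]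
    simp [nsmul_eq_mul]
  have htr1 : (1 : Matrix ι ι ℝ).trace = (Nn:ℝ) := by
    rw [Matrix.trace_one, hcardι]
  have hm0 : (0:ℝ) ≤ (m:ℝ) := Nat.cast_nonneg m
  have hmNr : (m:ℝ) < (Nn:ℝ) := by exact_mod_cast hm_up
  have hmain : (2 * k - 1) ^ 2 * (m:ℝ) ≤ ((Nn:ℝ) - 1) * ((Nn:ℝ) - (m:ℝ)) :=
    aux_trace_ineq D Q (2 * k - 1) (m:ℝ) (Nn:ℝ) hDsym hQsym htrD2 htrD htrQ2 htrQ htrDQ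
      htr1 hm0 hmNr
  -- integrality of k
  let Lpi : (ι → ℝ) →ₗ[ℝ] (EuclideanSpace ℝ (Fin n)) × ℝ :=
    { toFun := fun v => (∑ x : ι, v x • (x : EuclideanSpace ℝ (Fin n)), ∑ x : ι, v x)
      map_add' := by
        intro v w
        have h1 : ∑ x : ι, ((v + w) x) • (x : EuclideanSpace ℝ (Fin n))
            = (∑ x : ι, v x • (x : EuclideanSpace ℝ (Fin n)))
              + ∑ x : ι, w x • (x : EuclideanSpace ℝ (Fin n)) := by
          rw [← Finset.sum_add_distrib]
          exact Finset.sum_congr rfl fun x _ => by rw [Pi.add_apply, add_smul]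
        have h2 : ∑ x : ι, (v + w) x = (∑ x : ι, v x) + ∑ x : ι, w x := by
          rw [← Finset.sum_add_distrib]
          exact Finset.sum_congr rfl fun x _ => by rw [Pi.add_apply]
        simp only [h1, h2, Prod.mk_add_mk]
      map_smul' := by
        intro c v
        have h1 : ∑ x : ι, ((c • v) x) • (x : EuclideanSpace ℝ (Fin n))
            = c • ∑ x : ι, v x • (x : EuclideanSpace ℝ (Fin n)) := by
          rw [Finset.smul_sum]
          exact Finset.sum_congr rfl fun x _ => by
            rw [Pi.smul_apply, smul_eq_mul, mul_smul]
        have h2 : ∑ x : ι, (c • v) x = c * ∑ x : ι, v x := by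
          rw [Finset.mul_sum]
          exact Finset.sum_congr rfl fun x _ => by rw [Pi.smul_apply, smul_eq_mul]
        simp only [h1, h2, RingHom.id_apply, Prod.smul_mk, smul_eq_mul] }
  set Wpi : Submodule ℝ (ι → ℝ) := LinearMap.ker Lpi with hWpidef
  set m' : ℕ := Module.finrank ℝ Wpi with hm'def
  have hm'_low : Nn ≤ m' + (n + 1) := by
    have h := LinearMap.finrank_range_add_finrank_ker Lpi
    rw [← hWpidef, ← hm'def] at h
    rw [Module.finrank_pi, hcardι] at h
    have h2r : Module.finrank ℝ (LinearMap.range Lpi) ≤ n + 1 := by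
      have h3 := Submodule.finrank_le (LinearMap.range Lpi)
      rw [Module.finrank_prod, finrank_euclideanSpace_fin, Module.finrank_self] at h3
      omega
    omega
  set f : (ι → ℝ) →ₗ[ℝ] (ι → ℝ) := Matrix.toLin' A with hfdef
  have hfW : ∀ v ∈ Wpi, f v = (-k) • v := by
    intro v hv
    have hk0 := LinearMap.mem_ker.mp hv
    have hv1 : (∑ x : ι, v x • (x : EuclideanSpace ℝ (Fin n))) = 0 := congrArg Prod.fst hk0
    have hv2 : (∑ x : ι, v x) = 0 := congrArg Prod.snd hk0
    rw [hfdef, Matrix.toLin'_apply]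
    exact hAmul v hv1 hv2
  have hdvd1 : (X - Polynomial.C (-k)) ^ m' ∣ LinearMap.charpoly f :=
    aux_charpoly_dvd f Wpi (-k) hfW
  have hcpf : LinearMap.charpoly f = A.charpoly := by
    rw [← LinearMap.charpoly_toMatrix f (Pi.basisFun ℝ ι)]
    congr 1
    rw [LinearMap.toMatrix_eq_toMatrix', hfdef, LinearMap.toMatrix'_toLin']
  set pZ : Polynomial ℤ := Az.charpoly with hpZdef
  set pQ : Polynomial ℚ := pZ.map (Int.castRingHom ℚ) with hpQdef
  have hcast : A.charpoly = pQ.map (algebraMap ℚ ℝ) := by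
    rw [hAdef, Matrix.charpoly_map, hpQdef, Polynomial.map_map]
    have hsub : (Int.castRingHom ℝ) = (algebraMap ℚ ℝ).comp (Int.castRingHom ℚ) :=
      Subsingleton.elim _ _
    rw [← hsub, hpZdef]
  have hpQmonic : pQ.Monic := (Az.charpoly_monic).map _
  have hpQne : pQ ≠ 0 := hpQmonic.ne_zero
  have hpRne : pQ.map (algebraMap ℚ ℝ) ≠ 0 :=
    (hpQmonic.map (algebraMap ℚ ℝ)).ne_zero
  have hdvd2 : (X - Polynomial.C (-k)) ^ m' ∣ pQ.map (algebraMap ℚ ℝ) := by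
    rw [← hcast, ← hcpf]; exact hdvd1
  have hrm : m' ≤ (pQ.map (algebraMap ℚ ℝ)).rootMultiplicity (-k) :=
    (Polynomial.le_rootMultiplicity_iff hpRne).mpr hdvd2
  have hm'pos : 0 < m' := by omega
  have hroot : ((pQ.map (algebraMap ℚ ℝ))).IsRoot (-k) :=
    (Polynomial.rootMultiplicity_pos hpRne).mp (by omega)
  have hintQ : IsIntegral ℚ (-k) := by
    refine ⟨pQ, hpQmonic, ?_⟩
    rw [Polynomial.eval₂_eq_eval_map]
    exact hroot
  have hdvdμ : minpoly ℚ (-k) ^ m' ∣ pQ := aux_minpoly_pow_dvd hintQ m' pQ hpQne hrm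
  have hdegpQ : pQ.natDegree = Nn := by
    rw [hpQdef]
    rw [(Az.charpoly_monic).natDegree_map]
    rw [Az.charpoly_natDegree_eq_dim, hcardι]
  have hdegle : m' * (minpoly ℚ (-k)).natDegree ≤ Nn := by
    have h := Polynomial.natDegree_le_of_dvd hdvdμ hpQne
    rw [Polynomial.natDegree_pow] at h
    omega
  have hμpos : 0 < (minpoly ℚ (-k)).natDegree := minpoly.natDegree_pos hintQ
  have hd1 : (minpoly ℚ (-k)).natDegree = 1 := by
    by_contra hne1
    have h2d : 2 ≤ (minpoly ℚ (-k)).natDegree := by omega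
    have hmm : m' * 2 ≤ m' * (minpoly ℚ (-k)).natDegree := Nat.mul_le_mul_left m' h2d
    omega
  have hμeq : minpoly ℚ (-k) = X + Polynomial.C ((minpoly ℚ (-k)).coeff 0) :=
    (minpoly.monic hintQ).eq_X_add_C hd1
  have haevμ : (Polynomial.aeval (-k)) (minpoly ℚ (-k)) = 0 := minpoly.aeval ℚ (-k)
  have hkr : k = ((((minpoly ℚ (-k)).coeff 0 : ℚ)) : ℝ) := by
    rw [hμeq] at haevμ
    simp only [map_add, Polynomial.aeval_X, Polynomial.aeval_C] at haevμ
    push_cast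
    have : -k + ((((minpoly ℚ (-k)).coeff 0 : ℚ)) : ℝ) = 0 := by
      rw [← haevμ]
      norm_num
    linarith
  set r : ℚ := (minpoly ℚ (-k)).coeff 0 with hrdef
  have hintZ : IsIntegral ℤ (-r) := by
    refine ⟨pZ, Az.charpoly_monic, ?_⟩
    have hevalR : Polynomial.eval (-k) (pQ.map (algebraMap ℚ ℝ)) = 0 := hroot
    have hcastr : (-k) = algebraMap ℚ ℝ (-r) := by
      rw [hkr]; push_cast; norm_num
    rw [hcastr, Polynomial.eval_map, Polynomial.eval₂_at_apply] at hevalR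
    have hq0 : Polynomial.eval (-r) pQ = 0 := by
      have hinj := (algebraMap ℚ ℝ).injective
      apply hinj
      rw [hevalR, map_zero]
    rw [hpQdef, Polynomial.eval_map] at hq0
    rw [algebraMap_int_eq]
    exact hq0
  obtain ⟨z, hz⟩ := IsIntegrallyClosed.isIntegral_iff.mp hintZ
  have hzr : ((z : ℤ) : ℚ) = -r := by rw [← hz]; rfl
  set kZ : ℤ := -z with hkZdef
  have hkz : k = (kZ : ℝ) := by
    rw [hkr]
    have : ((kZ : ℤ) : ℚ) = r := by rw [hkZdef]; push_cast; rw [hzr]; ring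
    rw [← this]
    push_cast
    ring
  have hkZ2 : 2 ≤ kZ := by
    have : (1:ℝ) < (kZ : ℝ) := by rw [← hkz]; exact hk1
    exact_mod_cast this
  -- combine
  have hmainZ : (2 * kZ - 1) ^ 2 * (m : ℤ) ≤ ((Nn : ℤ) - 1) * ((Nn : ℤ) - (m : ℤ)) := by
    have h := hmain
    rw [hkz] at h
    exact_mod_cast h
  have hm_lowZ : (Nn : ℤ) ≤ (m : ℤ) + ((n : ℤ) + 1) := by exact_mod_cast hm_low
  have hm_upZ : (m : ℤ) < (Nn : ℤ) := by exact_mod_cast hm_up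
  have hcardZ : 2 * (n : ℤ) + 3 ≤ (Nn : ℤ) := by exact_mod_cast hcard
  have hnZ : 1 ≤ (n : ℤ) := by exact_mod_cast hn
  have hm0Z : (0 : ℤ) ≤ (m : ℤ) := Int.natCast_nonneg m
  have hsq : (2 * kZ - 1) ^ 2 ≤ 2 * (n : ℤ) := by
    by_contra hcon
    push_neg at hcon
    have h1 : 2 * (n : ℤ) + 1 ≤ (2 * kZ - 1) ^ 2 := hcon
    have hp0 : (2 * (n : ℤ) + 1) * (m : ℤ) ≤ (2 * kZ - 1) ^ 2 * (m : ℤ) :=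
      mul_le_mul_of_nonneg_right h1 hm0Z
    have hp1 : (0:ℤ) ≤ (2 * (n : ℤ) + 1) * ((m : ℤ) - ((Nn : ℤ) - (n : ℤ) - 1)) :=
      mul_nonneg (by linarith) (by linarith)
    have hp2 : (0:ℤ) ≤ ((Nn : ℤ) - 1) * (((n : ℤ) + 1) - ((Nn : ℤ) - (m : ℤ))) :=
      mul_nonneg (by linarith) (by linarith)
    have hp3 : (n : ℤ) * 1 ≤ (n : ℤ) * ((Nn : ℤ) - 2 * (n : ℤ) - 2) :=
      mul_le_mul_of_nonneg_left (by linarith) (by linarith)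
    nlinarith [hmainZ, hp0, hp1, hp2, hp3]
  set kN : ℕ := kZ.toNat with hkNdef
  have hkNz : (kN : ℤ) = kZ := Int.toNat_of_nonneg (by omega)
  have hkNr : (kN : ℝ) = k := by
    rw [hkz]
    exact_mod_cast congrArg (fun z : ℤ => (z : ℝ)) hkNz
  have hkN2 : 2 ≤ kN := by omega
  have h2kN : (2:ℝ) ≤ (kN : ℝ) := by exact_mod_cast hkN2
  refine ⟨kN, hkN2, ?_, ?_, ?_⟩
  · have h1 : (0:ℝ) ≤ 2 * (kN : ℝ) - 1 := by linarith
    have hsqR : (2 * (kN : ℝ) - 1) ^ 2 ≤ 2 * (n : ℝ) := by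
      have h := hsq
      rw [← hkNz] at h
      exact_mod_cast h
    have h3 : 2 * (kN : ℝ) - 1 ≤ Real.sqrt (2 * (n : ℝ)) := by
      rw [show (2:ℝ) * (kN : ℝ) - 1 = Real.sqrt ((2 * (kN : ℝ) - 1) ^ 2) from
        (Real.sqrt_sq h1).symm]
      exact Real.sqrt_le_sqrt hsqR
    linarith
  · exact hkNr.symm
  · have hken : (kN : ℝ) - 1 ≠ 0 := by
      intro h
      rw [sub_eq_zero] at h
      rw [h] at h2kN
      linarith
    rw [eq_div_iff hken]
    have hkab : k * (a - b) = 1 - b := by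
      rw [hkdef]
      field_simp
    rw [hkNr]
    linear_combination -hkab
end

section
/- Any set of unit vectors in ℝ^n all of whose pairwise inner products are negative has cardinality at most n+1. -/
open RealInnerProductSpace

/-- Rankin-type bound: unit vectors with pairwise negative inner products. -/
theorem stmt9 (n : ℕ) (C : Finset (EuclideanSpace ℝ (Fin n)))
    (hC : ∀ x ∈ C, ‖x‖ = 1)
    (hneg : ∀ x ∈ C, ∀ y ∈ C, x ≠ y → ⟪x, y⟫ < 0) :
    C.card ≤ n + 1 := by
  by_contra hcard
  push_neg at hcard
  obtain ⟨z, hz⟩ : C.Nonempty := Finset.card_pos.mp (by omega)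
  classical
  set D := C.erase z with hD
  have hDcard : n < D.card := by
    rw [hD, Finset.card_erase_of_mem hz]
    omega
  have hfr : Module.finrank ℝ (EuclideanSpace ℝ (Fin n)) < D.card := by
    simpa [finrank_euclideanSpace_fin] using hDcard
  obtain ⟨f, hsum, x₁, hx₁, hfx₁⟩ :=
    Module.exists_nontrivial_relation_of_finrank_lt_card (R := ℝ) hfr
  set P := D.filter (fun e => 0 < f e) with hP
  set N := D.filter (fun e => f e < 0) with hN
  set p := ∑ e ∈ P, f e • e with hp
  set q := ∑ e ∈ N, (-f e) • e with hq
  have hDmemC : ∀ e ∈ D, e ∈ C := fun e he => Finset.mem_of_mem_erase he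
  have hDne : ∀ e ∈ D, e ≠ z := fun e he => Finset.ne_of_mem_erase he
  have hNq : ∑ e ∈ N, f e • e = -q := by
    rw [hq, ← Finset.sum_neg_distrib]
    apply Finset.sum_congr rfl
    intros
    rw [neg_smul, neg_neg]
  have hqp : q = p := by
    have h1 : ∑ e ∈ D, f e • e
        = p + ∑ e ∈ D.filter (fun e => ¬ 0 < f e), f e • e := by
      rw [hp, Finset.sum_filter_add_sum_filter_not D (fun e => 0 < f e)]
    have h2 : ∑ e ∈ D.filter (fun e => ¬ 0 < f e), f e • e
        = ∑ e ∈ N, f e • e := by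
      symm
      apply Finset.sum_subset
      · intro e he
        rw [hN, Finset.mem_filter] at he
        rw [Finset.mem_filter]
        exact ⟨he.1, not_lt.mpr he.2.le⟩
      · intro e he heN
        rw [Finset.mem_filter] at he
        rw [hN, Finset.mem_filter] at heN
        have : f e = 0 := le_antisymm (not_lt.mp he.2) (not_lt.mp fun h => heN ⟨he.1, h⟩)
        simp [this]
    rw [hsum, h2, hNq] at h1
    have : p - q = 0 := by rw [sub_eq_add_neg]; exact h1.symm
    exact (sub_eq_zero.mp this).symm
  have hpq : ⟪p, q⟫ ≤ 0 := by
    rw [hp, hq, sum_inner]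
    apply Finset.sum_nonpos
    intro e he
    rw [inner_sum]
    apply Finset.sum_nonpos
    intro e' he'
    rw [real_inner_smul_left, real_inner_smul_right]
    rw [hP, Finset.mem_filter] at he
    rw [hN, Finset.mem_filter] at he'
    have hne : e ≠ e' := by
      rintro rfl
      exact absurd he.2 (not_lt.mpr he'.2.le)
    have hinner : ⟪e, e'⟫ < 0 := hneg e (hDmemC e he.1) e' (hDmemC e' he'.1) hne
    have h1 : (0:ℝ) < f e := he.2
    have h2 : (0:ℝ) < -f e' := by linarith [he'.2]
    have := mul_neg_of_pos_of_neg h2 hinner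
    exact le_of_lt (mul_neg_of_pos_of_neg h1 this)
  have hp0 : p = 0 := by
    have hself : ⟪p, p⟫ ≤ 0 := by rw [← hqp] at hpq ⊢; exact hpq
    exact real_inner_self_nonpos.mp hself
  have hq0 : q = 0 := by rw [hqp, hp0]
  have hPempty : P = ∅ := by
    by_contra hne
    have hPne : P.Nonempty := Finset.nonempty_of_ne_empty hne
    have hlt : ⟪p, z⟫ < 0 := by
      rw [hp, sum_inner]
      apply Finset.sum_neg _ hPne
      intro e he
      rw [real_inner_smul_left]
      rw [hP, Finset.mem_filter] at he
      exact mul_neg_of_pos_of_neg he.2 (hneg e (hDmemC e he.1) z hz (hDne e he.1))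
    rw [hp0] at hlt
    simp at hlt
  have hNempty : N = ∅ := by
    by_contra hne
    have hNne : N.Nonempty := Finset.nonempty_of_ne_empty hne
    have hlt : ⟪q, z⟫ < 0 := by
      rw [hq, sum_inner]
      apply Finset.sum_neg _ hNne
      intro e he
      rw [real_inner_smul_left]
      rw [hN, Finset.mem_filter] at he
      have h2 : (0:ℝ) < -f e := by linarith [he.2]
      exact mul_neg_of_pos_of_neg h2 (hneg e (hDmemC e he.1) z hz (hDne e he.1))
    rw [hq0] at hlt
    simp at hlt
  rcases lt_trichotomy (f x₁) 0 with h | h | h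
  · have : x₁ ∈ N := by rw [hN, Finset.mem_filter]; exact ⟨hx₁, h⟩
    rw [hNempty] at this; simp at this
  · exact hfx₁ h
  · have : x₁ ∈ P := by rw [hP, Finset.mem_filter]; exact ⟨hx₁, h⟩
    rw [hPempty] at this; simp at this
end

section
/- Any set of unit vectors in ℝ^n all of whose pairwise inner products are at most 0 has cardinality at most 2n. -/
open RealInnerProductSpace Module

theorem rankin_aux : ∀ (n : ℕ) (E : Type) [NormedAddCommGroup E] [InnerProductSpace ℝ E]
    [FiniteDimensional ℝ E], finrank ℝ E ≤ n →
    ∀ C : Finset E, (∀ x ∈ C, ‖x‖ = 1) →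
    (∀ x ∈ C, ∀ y ∈ C, x ≠ y → ⟪x, y⟫ ≤ 0) → C.card ≤ 2 * finrank ℝ E := by
  intro n
  induction n with
  | zero =>
    intro E _ _ _ hn C hC hnp
    interval_cases h : finrank ℝ E
    · -- E is trivial
      have : C = ∅ := by
        by_contra hne
        obtain ⟨x, hx⟩ := Finset.nonempty_iff_ne_empty.mpr hne
        have h0 : x = 0 := by
          have := finrank_zero_iff (R := ℝ) (M := E) |>.mp h
          exact Subsingleton.elim x 0
        have := hC x hx
        rw [h0, norm_zero] at this
        norm_num at this
      simp [this]
  | succ n ih =>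
    intro E _ _ _ hn C hC hnp
    classical
    rcases C.eq_empty_or_nonempty with rfl | ⟨x, hx⟩
    · simp
    have hxnorm : ‖x‖ = 1 := hC x hx
    have hxne : x ≠ 0 := by intro h; rw [h, norm_zero] at hxnorm; norm_num at hxnorm
    set K : Submodule ℝ E := (ℝ ∙ x)ᗮ with hK
    have hrank : finrank ℝ K + 1 = finrank ℝ E := by
      have := Submodule.finrank_add_finrank_orthogonal (K := (ℝ ∙ x : Submodule ℝ E))
      rw [finrank_span_singleton hxne] at this
      rw [hK]
      omega
    have hrankK : finrank ℝ K ≤ n := by omega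
    have hEpos : 1 ≤ finrank ℝ E := by omega
    set P : E → K := fun y => K.orthogonalProjectionOnto y with hP
    -- decomposition
    have hdecomp : ∀ y : E, y = ⟪x, y⟫ • x + (P y : E) := by
      intro y
      have h1 := Submodule.starProjection_add_starProjection_orthogonal (K := ℝ ∙ x) y
      have h2 : ((ℝ ∙ x).starProjection y : E) = ⟪x, y⟫ • x := by
        rw [Submodule.starProjection_singleton]
        rw [hxnorm]
        norm_num
      rw [h2] at h1
      exact h1.symm
    have hPK : ∀ y : E, ((P y : E)) ∈ K := fun y => (P y).2
    have hPx : ∀ y : E, ⟪(P y : E), x⟫ = 0 := by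
      intro y
      exact (Submodule.mem_orthogonal' _ _).mp (hPK y) x (Submodule.mem_span_singleton_self x)
    -- inner product formula
    have hinner : ∀ y z : E, ⟪y, z⟫ = ⟪x, y⟫ * ⟪x, z⟫ + ⟪(P y : E), (P z : E)⟫ := by
      intro y z
      have hxP : ∀ w : E, ⟪x, (P w : E)⟫ = 0 := fun w => by
        rw [real_inner_comm]; exact hPx w
      conv_lhs => rw [hdecomp y, hdecomp z]
      simp only [inner_add_left, inner_add_right, real_inner_smul_left, real_inner_smul_right,
        hxP, hPx]
      have hxx : ⟪x, x⟫ = 1 := by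
        rw [real_inner_self_eq_norm_sq, hxnorm]; norm_num
      ring_nf
      rw [hxx]
      ring
    -- key: projections of elements ≠ x, -x are nonzero
    set S := (C.erase x).erase (-x) with hS
    have hSsub : ∀ y ∈ S, y ∈ C ∧ y ≠ x ∧ y ≠ -x := by
      intro y hy
      rw [hS] at hy
      have h1 := Finset.mem_of_mem_erase hy
      exact ⟨Finset.mem_of_mem_erase h1, Finset.ne_of_mem_erase h1, Finset.ne_of_mem_erase hy⟩
    have hPne : ∀ y ∈ S, (P y : E) ≠ 0 := by
      intro y hy h0
      obtain ⟨hyC, hyx, hynx⟩ := hSsub y hy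
      have hd := hdecomp y
      rw [h0, add_zero] at hd
      have hxy : ⟪x, y⟫ ≤ 0 := by
        rw [real_inner_comm]; exact hnp y hyC x hx hyx
      have hny : ‖y‖ = 1 := hC y hyC
      rw [hd] at hny
      rw [norm_smul, hxnorm, mul_one, Real.norm_eq_abs, abs_of_nonpos hxy] at hny
      have : ⟪x, y⟫ = -1 := by linarith
      rw [this] at hd
      exact hynx (by rw [hd]; simp)
    -- pairwise nonpositivity of projections
    have hPnp : ∀ y ∈ S, ∀ z ∈ S, y ≠ z → ⟪(P y : E), (P z : E)⟫ ≤ 0 := by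
      intro y hy z hz hyz
      obtain ⟨hyC, hyx, _⟩ := hSsub y hy
      obtain ⟨hzC, hzx, _⟩ := hSsub z hz
      have h1 : ⟪y, z⟫ ≤ 0 := hnp y hyC z hzC hyz
      have h2 : ⟪x, y⟫ ≤ 0 := by rw [real_inner_comm]; exact hnp y hyC x hx hyx
      have h3 : ⟪x, z⟫ ≤ 0 := by rw [real_inner_comm]; exact hnp z hzC x hx hzx
      have h4 := hinner y z
      nlinarith
    -- normalized projections
    set g : E → K := fun y => ‖(P y : E)‖⁻¹ • P y with hg
    have hgnorm : ∀ y ∈ S, ‖g y‖ = 1 := by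
      intro y hy
      rw [hg]
      simp only [norm_smul, norm_inv, Real.norm_eq_abs, abs_abs]
      have : ‖(P y : E)‖ ≠ 0 := by
        simpa using hPne y hy
      rw [abs_of_nonneg (norm_nonneg _)]
      have hPn : ‖(P y)‖ = ‖(P y : E)‖ := rfl
      rw [hPn]
      field_simp
    have hginner : ∀ y ∈ S, ∀ z ∈ S, y ≠ z → ⟪g y, g z⟫ ≤ 0 := by
      intro y hy z hz hyz
      rw [hg]
      simp only [real_inner_smul_left, real_inner_smul_right]
      have h1 : ⟪P y, P z⟫ ≤ 0 := by
        rw [Submodule.coe_inner]; exact hPnp y hy z hz hyz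
      have h2 : (0:ℝ) ≤ ‖(P y : E)‖⁻¹ := by positivity
      have h3 : (0:ℝ) ≤ ‖(P z : E)‖⁻¹ := by positivity
      exact mul_nonpos_of_nonneg_of_nonpos h3 (mul_nonpos_of_nonneg_of_nonpos h2 h1)
    have hginj : Set.InjOn g S := by
      intro y hy z hz hyz
      by_contra hne
      have h1 := hginner y hy z hz hne
      have h2 : g y = g z := hyz
      rw [h2] at h1
      have h3 : ⟪g z, g z⟫ = 1 := by
        rw [real_inner_self_eq_norm_sq]
        have := hgnorm z hz
        rw [this]; norm_num
      linarith
    set D : Finset K := S.image g with hD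
    have hDcard : D.card = S.card := Finset.card_image_of_injOn hginj
    have hDnorm : ∀ u ∈ D, ‖u‖ = 1 := by
      intro u hu
      rw [hD] at hu
      obtain ⟨y, hy, rfl⟩ := Finset.mem_image.mp hu
      exact hgnorm y hy
    have hDnp : ∀ u ∈ D, ∀ v ∈ D, u ≠ v → ⟪u, v⟫ ≤ 0 := by
      intro u hu v hv huv
      rw [hD] at hu hv
      obtain ⟨y, hy, rfl⟩ := Finset.mem_image.mp hu
      obtain ⟨z, hz, rfl⟩ := Finset.mem_image.mp hv
      exact hginner y hy z hz (fun h => huv (by rw [h]))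
    have hind := ih K hrankK D hDnorm hDnp
    have hScard : C.card ≤ S.card + 2 := by
      rw [hS]
      have h1 := Finset.pred_card_le_card_erase (a := -x) (s := C.erase x)
      have h2 := Finset.pred_card_le_card_erase (a := x) (s := C)
      omega
    omega

/-- Rankin's bound: unit vectors with pairwise nonpositive inner products. -/
theorem stmt10 (n : ℕ) (C : Finset (EuclideanSpace ℝ (Fin n)))
    (hC : ∀ x ∈ C, ‖x‖ = 1)
    (hnp : ∀ x ∈ C, ∀ y ∈ C, x ≠ y → ⟪x, y⟫ ≤ 0) :
    C.card ≤ 2 * n := by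
  have := rankin_aux n (EuclideanSpace ℝ (Fin n)) (by simp) C hC hnp
  simpa using this
end

section
/- The maximum number of equiangular lines in ℝ^n is at most n(n+1)/2 (Gerzon's bound): if v_1,...,v_m are unit vectors in ℝ^n with |⟨v_i,v_j⟩| = α for all i ≠ j, where 0 < α < 1, then m ≤ n(n+1)/2. -/
open RealInnerProductSpace

/-- Gerzon's bound on equiangular lines. -/
theorem stmt12 (n m : ℕ) (α : ℝ) (hα : 0 < α) (hα1 : α < 1)
    (v : Fin m → EuclideanSpace ℝ (Fin n)) (hv : ∀ i, ‖v i‖ = 1)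
    (heq : ∀ i j, i ≠ j → |⟪v i, v j⟫| = α) :
    m ≤ n * (n + 1) / 2 := by
  classical
  have key : LinearIndependent ℝ (fun i : Fin m =>
      (Sym2.lift ⟨fun j k => v i j * v i k, fun j k => mul_comm _ _⟩ :
        Sym2 (Fin n) → ℝ)) := by
    rw [Fintype.linearIndependent_iff]
    intro g hg
    have hjk : ∀ j k : Fin n, ∑ i, g i * (v i j * v i k) = 0 := by
      intro j k
      have := congrFun hg s(j, k)
      simpa [Finset.sum_apply] using this
    have hip : ∀ i j : Fin m, ⟪v i, v j⟫ = ∑ k, v i k * v j k := by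
      intro i j
      simp [PiLp.inner_apply, RCLike.inner_apply, mul_comm]
    have hT : ∀ l, ∑ i, g i * ⟪v i, v l⟫ ^ 2 = 0 := by
      intro l
      calc ∑ i, g i * ⟪v i, v l⟫ ^ 2
          = ∑ i, ∑ j, ∑ k, v l j * v l k * (g i * (v i j * v i k)) := by
            refine Finset.sum_congr rfl fun i _ => ?_
            rw [hip, sq, Finset.sum_mul_sum, Finset.mul_sum]
            refine Finset.sum_congr rfl fun j _ => ?_
            rw [Finset.mul_sum]
            refine Finset.sum_congr rfl fun k _ => ?_
            ring
        _ = ∑ j, ∑ k, v l j * v l k * ∑ i, g i * (v i j * v i k) := by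
            rw [Finset.sum_comm]
            refine Finset.sum_congr rfl fun j _ => ?_
            rw [Finset.sum_comm]
            refine Finset.sum_congr rfl fun k _ => ?_
            rw [Finset.mul_sum]
        _ = 0 := by simp [hjk]
    have hnorm : ∀ l, ⟪v l, v l⟫ = 1 := fun l => by
      rw [real_inner_self_eq_norm_sq, hv]; norm_num
    have hsq : ∀ i l, i ≠ l → ⟪v i, v l⟫ ^ 2 = α ^ 2 := by
      intro i l h
      rw [← sq_abs, heq i l h]
    set S := ∑ i, g i with hS
    have hgl : ∀ l, g l * (1 - α ^ 2) = -(α ^ 2 * S) := by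
      intro l
      have h0 := hT l
      rw [← Finset.add_sum_erase _ _ (Finset.mem_univ l)] at h0
      rw [hnorm, one_pow, mul_one] at h0
      have h2 : ∑ i ∈ Finset.univ.erase l, g i * ⟪v i, v l⟫ ^ 2
          = ∑ i ∈ Finset.univ.erase l, g i * α ^ 2 := by
        refine Finset.sum_congr rfl fun i hi => ?_
        rw [hsq i l (Finset.ne_of_mem_erase hi)]
      rw [h2, ← Finset.sum_mul] at h0
      have h3 : ∑ i ∈ Finset.univ.erase l, g i = S - g l := by
        rw [hS, ← Finset.add_sum_erase _ _ (Finset.mem_univ l)]; ring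
      rw [h3] at h0
      nlinarith [h0]
    have hSsum : S * (1 - α ^ 2) = -((m:ℝ) * (α ^ 2 * S)) := by
      have h4 := Finset.sum_congr rfl (fun l (_ : l ∈ (Finset.univ : Finset (Fin m))) => hgl l)
      rw [← Finset.sum_mul] at h4
      simpa [hS, Finset.sum_const, Finset.card_univ] using h4
    have hfac : (0:ℝ) < 1 - α ^ 2 + α ^ 2 * m := by
      have hm : (0:ℝ) ≤ m := Nat.cast_nonneg m
      nlinarith [sq_nonneg α]
    have hS0 : S = 0 := by
      have h5 : S * (1 - α ^ 2 + α ^ 2 * m) = 0 := by linear_combination hSsum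
      rcases mul_eq_zero.mp h5 with h | h
      · exact h
      · exact absurd h (ne_of_gt hfac)
    intro i
    have h6 := hgl i
    rw [hS0] at h6
    have h7 : (0:ℝ) < 1 - α ^ 2 := by nlinarith
    have h8 : g i * (1 - α ^ 2) = 0 := by linarith [h6]
    rcases mul_eq_zero.mp h8 with h | h
    · exact h
    · exact absurd h (ne_of_gt h7)
  have hcard := key.fintype_card_le_finrank
  rw [Module.finrank_fintype_fun_eq_card, Sym2.card, Fintype.card_fin] at hcard
  have hc : (n + 1).choose 2 = n * (n + 1) / 2 := by
    rw [Nat.choose_two_right]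
    simp [Nat.mul_comm]
  simpa [hc] using hcard
end

section
/- If v_1,...,v_m are unit vectors in ℝ^n with |⟨v_i,v_j⟩| = α for all i ≠ j, 0 < α < 1, then the symmetric matrices v_i v_i^T (outer products) are linearly independent in the space of symmetric n×n matrices. -/
open RealInnerProductSpace

/-- The outer products `vᵢ vᵢᵀ` of equiangular unit vectors are linearly independent
(as symmetric `n × n` matrices). -/
theorem stmt13 (n m : ℕ) (α : ℝ) (hα : 0 < α) (hα1 : α < 1)
    (v : Fin m → EuclideanSpace ℝ (Fin n)) (hv : ∀ i, ‖v i‖ = 1)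
    (heq : ∀ i j, i ≠ j → |⟪v i, v j⟫| = α) :
    LinearIndependent ℝ
      (fun i : Fin m => Matrix.of (fun k l : Fin n => v i k * v i l)) := by
  rw [Fintype.linearIndependent_iff]
  intro g hg
  have h1 : ∀ k l, ∑ i, g i * (v i k * v i l) = 0 := by
    intro k l
    have := congrFun (congrFun hg k) l
    simpa [Matrix.sum_apply] using this
  have hinner : ∀ i j : Fin m, ⟪v i, v j⟫ = ∑ k, v i k * v j k := by
    intro i j
    simp [PiLp.inner_apply, RCLike.inner_apply, mul_comm]
  have key : ∀ j, ∑ i, g i * ⟪v i, v j⟫ ^ 2 = 0 := by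
    intro j
    have expand : ∀ i, g i * ⟪v i, v j⟫ ^ 2
        = ∑ k, ∑ l, g i * (v i k * v i l) * (v j k * v j l) := by
      intro i
      rw [hinner, sq, Finset.sum_mul_sum]
      rw [Finset.mul_sum]
      refine Finset.sum_congr rfl fun k _ => ?_
      rw [Finset.mul_sum]
      exact Finset.sum_congr rfl fun l _ => by ring
    calc ∑ i, g i * ⟪v i, v j⟫ ^ 2
        = ∑ i, ∑ k, ∑ l, g i * (v i k * v i l) * (v j k * v j l) :=
          Finset.sum_congr rfl fun i _ => expand i
      _ = ∑ k, ∑ l, ∑ i, g i * (v i k * v i l) * (v j k * v j l) := by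
          rw [Finset.sum_comm]
          exact Finset.sum_congr rfl fun k _ => Finset.sum_comm
      _ = ∑ k, ∑ l, (∑ i, g i * (v i k * v i l)) * (v j k * v j l) := by
          refine Finset.sum_congr rfl fun k _ => Finset.sum_congr rfl fun l _ => ?_
          rw [Finset.sum_mul]
      _ = 0 := by simp [h1]
  have hself : ∀ i, ⟪v i, v i⟫ = 1 := by
    intro i
    rw [real_inner_self_eq_norm_sq, hv]; norm_num
  have hsq : ∀ i j : Fin m, i ≠ j → ⟪v i, v j⟫ ^ 2 = α ^ 2 := by
    intro i j hij
    rw [← sq_abs, heq i j hij]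
  set S : ℝ := ∑ i, g i with hS
  have hj : ∀ j, (1 - α ^ 2) * g j + α ^ 2 * S = 0 := by
    intro j
    have h := key j
    rw [← Finset.add_sum_erase _ _ (Finset.mem_univ j)] at h
    have h2 : ∑ i ∈ Finset.univ.erase j, g i * ⟪v i, v j⟫ ^ 2
        = ∑ i ∈ Finset.univ.erase j, g i * α ^ 2 :=
      Finset.sum_congr rfl fun i hi => by rw [hsq i j (Finset.ne_of_mem_erase hi)]
    rw [h2, ← Finset.sum_mul, Finset.sum_erase_eq_sub (Finset.mem_univ j), hself] at h
    rw [← hS] at h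
    nlinarith [h]
  have hsum : (1 - α ^ 2 + (m : ℝ) * α ^ 2) * S = 0 := by
    have h := Finset.sum_congr rfl (fun j (_ : j ∈ Finset.univ) => hj j)
    simp only [Finset.sum_add_distrib, ← Finset.mul_sum, Finset.sum_const,
      Finset.card_univ, Fintype.card_fin, nsmul_eq_mul, Finset.sum_const_zero] at h
    rw [← hS] at h
    nlinarith [h]
  have hα2 : α ^ 2 < 1 := by nlinarith
  have hS0 : S = 0 := by
    have hpos : 0 < 1 - α ^ 2 + (m : ℝ) * α ^ 2 := by nlinarith [mul_nonneg (Nat.cast_nonneg m : (0:ℝ) ≤ m) (sq_nonneg α)]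
    exact (mul_eq_zero.mp hsum).resolve_left (ne_of_gt hpos)
  intro i
  have := hj i
  rw [hS0, mul_zero, add_zero] at this
  have h1α : (1 : ℝ) - α ^ 2 ≠ 0 := by nlinarith
  exact (mul_eq_zero.mp this).resolve_left h1α
end

section
/- Let C be a finite set of unit vectors in ℝ^n with ⟨x,y⟩ ∈ {a,b} for distinct x,y ∈ C, and a+b ≥ 0 with b < a < 1. Then the functions f_x(z) = (⟨x,z⟩ − a)(⟨x,z⟩ − b), for x ∈ C, restricted to the sphere, are linearly independent elements of the space of polynomials of degree ≤ 2 on S^{n-1}, and hence |C| is at most the dimension of the space spanned by such quadratic polynomials. -/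
open RealInnerProductSpace

/-- The functions `f_x(z) = (⟪x,z⟫ - a)(⟪x,z⟫ - b)` on the sphere, for `x ∈ C`, are
linearly independent, and hence `|C|` is bounded by the dimension of their span. -/
theorem stmt15 (n : ℕ) (C : Finset (EuclideanSpace ℝ (Fin n)))
    (hC : ∀ x ∈ C, ‖x‖ = 1) (a b : ℝ) (hba : b < a) (ha1 : a < 1) (hab : 0 ≤ a + b)
    (h2 : ∀ x ∈ C, ∀ y ∈ C, x ≠ y → ⟪x, y⟫ = a ∨ ⟪x, y⟫ = b)
    (f : EuclideanSpace ℝ (Fin n) →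
      (Metric.sphere (0 : EuclideanSpace ℝ (Fin n)) 1 → ℝ))
    (hf : ∀ x, ∀ z : Metric.sphere (0 : EuclideanSpace ℝ (Fin n)) 1,
      f x z = (⟪x, (z : EuclideanSpace ℝ (Fin n))⟫ - a) *
              (⟪x, (z : EuclideanSpace ℝ (Fin n))⟫ - b)) :
    LinearIndependent ℝ (fun x : {x // x ∈ C} => f x.1) ∧
    C.card ≤ Module.finrank ℝ
      (Submodule.span ℝ (Set.range (fun x : {x // x ∈ C} => f x.1))) := by
  classical
  have hind : LinearIndependent ℝ (fun x : {x // x ∈ C} => f x.1) := by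
    rw [Fintype.linearIndependent_iff]
    intro g hg i
    have hi : (i.1 : EuclideanSpace ℝ (Fin n)) ∈
        Metric.sphere (0 : EuclideanSpace ℝ (Fin n)) 1 := by
      rw [mem_sphere_zero_iff_norm]; exact hC _ i.2
    have hz := congrFun hg ⟨i.1, hi⟩
    simp only [Finset.sum_apply, Pi.smul_apply, smul_eq_mul, Pi.zero_apply] at hz
    rw [Finset.sum_eq_single i] at hz
    · have h1 : ⟪(i.1 : EuclideanSpace ℝ (Fin n)), (i.1 : EuclideanSpace ℝ (Fin n))⟫ = (1:ℝ) := by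
        rw [real_inner_self_eq_norm_sq, hC _ i.2]; norm_num
      rw [hf] at hz
      simp only [h1] at hz
      have hpos : ((1:ℝ) - a) * (1 - b) ≠ 0 :=
        ne_of_gt (mul_pos (by linarith) (by linarith))
      rcases mul_eq_zero.mp hz with h | h
      · exact h
      · exact absurd h hpos
    · intro x _ hxi
      rw [hf]
      have hne : x.1 ≠ i.1 := fun h => hxi (Subtype.ext h)
      rcases h2 x.1 x.2 i.1 i.2 hne with h | h <;> rw [h] <;> ring
    · intro h; exact absurd (Finset.mem_univ i) h
  refine ⟨hind, ?_⟩
  have := finrank_span_eq_card hind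
  rw [this, Fintype.card_coe]
end

section
/- Any spherical two-distance set in ℝ^n has cardinality at most n(n+3)/2. (Delsarte–Goethals–Seidel harmonic bound.) -/
open RealInnerProductSpace

/-- Delsarte–Goethals–Seidel harmonic bound: a spherical two-distance set in `ℝⁿ`
has at most `n(n+3)/2` points. -/
theorem stmt16 (n : ℕ) (C : Finset (EuclideanSpace ℝ (Fin n)))
    (hC : ∀ x ∈ C, ‖x‖ = 1)
    (h2 : ∃ a b : ℝ, a ≠ b ∧
      {t : ℝ | ∃ x ∈ C, ∃ y ∈ C, x ≠ y ∧ ⟪x, y⟫ = t} = {a, b}) :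
    C.card ≤ n * (n + 3) / 2 := by
  classical
  obtain ⟨a, b, hab, hset⟩ := h2
  have _Edummy : True := trivial
  -- a and b are attained, hence ≠ 1
  have hattained : ∀ t ∈ ({a, b} : Set ℝ), t ≠ 1 := by
    intro t ht
    rw [← hset] at ht
    obtain ⟨x, hx, y, hy, hxy, hip⟩ := ht
    intro h1
    exact hxy ((inner_eq_one_iff_of_norm_eq_one (hC x hx) (hC y hy)).mp (hip.trans h1))
  have ha1 : a ≠ 1 := hattained a (by simp)
  have hb1 : b ≠ 1 := hattained b (by simp)
  have hc0 : ((1 : ℝ) - a) * (1 - b) ≠ 0 :=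
    mul_ne_zero (sub_ne_zero.mpr fun h => ha1 h.symm) (sub_ne_zero.mpr fun h => hb1 h.symm)
  -- generators of the function space
  let g : Fin n → Fin n → (↥C → ℝ) := fun i j y => (y : EuclideanSpace ℝ (Fin n)) i * (y : EuclideanSpace ℝ (Fin n)) j
  let h : Fin n → (↥C → ℝ) := fun i y => (y : EuclideanSpace ℝ (Fin n)) i
  let u : Sym2 (Fin n) ⊕ Fin n → (↥C → ℝ) :=
    Sum.elim (Sym2.lift ⟨g, fun i j => by funext y; simp [g]; ring⟩) h
  set S : Submodule ℝ (↥C → ℝ) := Submodule.span ℝ (Set.range u) with hS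
  have hg : ∀ i j, g i j ∈ S := fun i j =>
    Submodule.subset_span ⟨Sum.inl s(i, j), by simp [u]⟩
  have hh : ∀ i, h i ∈ S := fun i => Submodule.subset_span ⟨Sum.inr i, rfl⟩
  -- the key family
  let f : ↥C → (↥C → ℝ) := fun x y =>
    (⟪(x : EuclideanSpace ℝ (Fin n)), (y : EuclideanSpace ℝ (Fin n))⟫ - a) * (⟪(x : EuclideanSpace ℝ (Fin n)), (y : EuclideanSpace ℝ (Fin n))⟫ - b)
  -- each f x lies in S
  have hfS : ∀ x : ↥C, f x ∈ S := by
    intro x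
    have hfx : f x = (∑ p : Fin n × Fin n, ((x : EuclideanSpace ℝ (Fin n)) p.1 * (x : EuclideanSpace ℝ (Fin n)) p.2) • g p.1 p.2)
        + (∑ i, (a * b) • g i i) + (∑ i, (-(a + b) * (x : EuclideanSpace ℝ (Fin n)) i) • h i) := by
      funext y
      have hy1 : ∑ i, (y : EuclideanSpace ℝ (Fin n)) i * (y : EuclideanSpace ℝ (Fin n)) i = 1 := by
        have h1 : ⟪(y : EuclideanSpace ℝ (Fin n)), (y : EuclideanSpace ℝ (Fin n))⟫ = 1 := by
          rw [real_inner_self_eq_norm_sq, hC _ y.2, one_pow]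
        rw [PiLp.inner_apply] at h1
        simpa [RCLike.inner_apply, ← sq] using h1
      have hip : ⟪(x : EuclideanSpace ℝ (Fin n)), (y : EuclideanSpace ℝ (Fin n))⟫ = ∑ i, (x : EuclideanSpace ℝ (Fin n)) i * (y : EuclideanSpace ℝ (Fin n)) i := by
        simp [PiLp.inner_apply, RCLike.inner_apply]
        exact Finset.sum_congr rfl fun _ _ => mul_comm _ _
      simp only [Pi.add_apply, Finset.sum_apply, Pi.smul_apply, smul_eq_mul, g, h, f, hip]
      rw [Fintype.sum_prod_type]
      set s := ∑ i, (x : EuclideanSpace ℝ (Fin n)) i * (y : EuclideanSpace ℝ (Fin n)) i with hs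
      have hA : ∑ i, ∑ j, (x : EuclideanSpace ℝ (Fin n)) i * (x : EuclideanSpace ℝ (Fin n)) j * ((y : EuclideanSpace ℝ (Fin n)) i * (y : EuclideanSpace ℝ (Fin n)) j) = s * s := by
        rw [hs, Finset.sum_mul_sum]
        congr 1; funext i; congr 1; funext j; ring
      have hB : ∑ i, a * b * ((y : EuclideanSpace ℝ (Fin n)) i * (y : EuclideanSpace ℝ (Fin n)) i) = a * b := by
        rw [← Finset.mul_sum, hy1, mul_one]
      have hC' : ∑ i, -(a + b) * (x : EuclideanSpace ℝ (Fin n)) i * ((y : EuclideanSpace ℝ (Fin n)) i) = -(a + b) * s := by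
        rw [hs, Finset.mul_sum]
        congr 1; funext i; ring
      rw [hA, hB, hC']; ring
    rw [hfx]
    refine Submodule.add_mem _ (Submodule.add_mem _ (Submodule.sum_mem _ fun p _ =>
      Submodule.smul_mem _ _ (hg p.1 p.2)) (Submodule.sum_mem _ fun i _ =>
      Submodule.smul_mem _ _ (hg i i))) (Submodule.sum_mem _ fun i _ =>
      Submodule.smul_mem _ _ (hh i))
  -- f x is a scaled indicator
  have hfsingle : ∀ x : ↥C, f x = Pi.single x ((1 - a) * (1 - b)) := by
    intro x
    funext y
    by_cases hyx : y = x
    · subst hyx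
      have : ⟪(y : EuclideanSpace ℝ (Fin n)), (y : EuclideanSpace ℝ (Fin n))⟫ = 1 := by
        rw [real_inner_self_eq_norm_sq, hC _ y.2]; norm_num
      simp only [f, Pi.single_eq_same]
      rw [this]
    · have hmem : ⟪(x : EuclideanSpace ℝ (Fin n)), (y : EuclideanSpace ℝ (Fin n))⟫ ∈ ({a, b} : Set ℝ) := by
        rw [← hset]
        exact ⟨x, x.2, y, y.2, fun hh' => hyx (Subtype.ext hh'.symm), rfl⟩
      have : f x y = 0 := by
        rcases hmem with hm | hm <;> · simp only [f]; rw [hm]; ring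
      rw [this, Pi.single_eq_of_ne hyx]
  -- linear independence
  have hli : LinearIndependent ℝ f := by
    rw [Fintype.linearIndependent_iff]
    intro c hc x
    have := congrFun hc x
    simp only [Finset.sum_apply, Pi.smul_apply, smul_eq_mul, Pi.zero_apply] at this
    rw [Finset.sum_eq_single x] at this
    · rw [hfsingle x, Pi.single_eq_same] at this
      rcases mul_eq_zero.mp this with h' | h'
      · exact h'
      · exact absurd h' hc0
    · intro y _ hyx
      rw [hfsingle y, Pi.single_eq_of_ne (fun h' => hyx h'.symm)]
      simp
    · intro hx; exact absurd (Finset.mem_univ x) hx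
  -- dimension count
  haveI : FiniteDimensional ℝ ↥S := FiniteDimensional.span_of_finite ℝ (Set.finite_range u)
  let f' : ↥C → ↥S := fun x => ⟨f x, hfS x⟩
  have hli' : LinearIndependent ℝ f' := by
    apply LinearIndependent.of_comp S.subtype
    exact hli
  have hcard : Fintype.card ↥C ≤ Module.finrank ℝ ↥S := hli'.fintype_card_le_finrank
  have hrank : Module.finrank ℝ ↥S ≤ Fintype.card (Sym2 (Fin n) ⊕ Fin n) := finrank_range_le_card u
  have hcardι : Fintype.card (Sym2 (Fin n) ⊕ Fin n) = (n + 1).choose 2 + n := by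
    rw [Fintype.card_sum, Sym2.card, Fintype.card_fin]
  have hch : (n + 1).choose 2 = (n + 1) * n / 2 := by
    rw [Nat.choose_two_right]; simp
  obtain ⟨k, hk⟩ := Nat.even_mul_succ_self n
  have : C.card ≤ (n + 1) * n / 2 + n := by
    rw [← hch]
    calc C.card = Fintype.card ↥C := (Fintype.card_coe C).symm
      _ ≤ Module.finrank ℝ ↥S := hcard
      _ ≤ Fintype.card (Sym2 (Fin n) ⊕ Fin n) := hrank
      _ = (n + 1).choose 2 + n := hcardι
  have e1 : (n + 1) * n = 2 * k := by rw [mul_comm (n + 1) n, hk]; ring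
  have e2 : n * (n + 3) = 2 * (k + n) := by
    have h3 : n * (n + 3) = n * (n + 1) + 2 * n := by ring
    rw [h3, hk]; ring
  rw [e1, Nat.mul_div_cancel_left _ (by norm_num)] at this
  rw [e2, Nat.mul_div_cancel_left _ (by norm_num)]
  omega
end

section
/- A univariate real polynomial f of degree at most m satisfies f(a) ≥ 0 for all a in the closed interval [a₁,a₂] (with a₁ < a₂) if and only if the polynomial f⁺(a) = (1+a²)^m · f((a₁ + a₂·a²)/(1+a²)) is nonnegative for all real a. -/
/-- A polynomial `f` of degree at most `m` is nonnegative on `[a₁, a₂]` if and only if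
the polynomial `f⁺(a) = (1+a²)^m f((a₁ + a₂ a²)/(1+a²))` is nonnegative on all of `ℝ`. -/
theorem stmt18 (m : ℕ) (f : Polynomial ℝ) (hdeg : f.natDegree ≤ m)
    (a₁ a₂ : ℝ) (h : a₁ < a₂) :
    (∀ a ∈ Set.Icc a₁ a₂, 0 ≤ f.eval a) ↔
    (∀ a : ℝ, 0 ≤ (1 + a ^ 2) ^ m * f.eval ((a₁ + a₂ * a ^ 2) / (1 + a ^ 2))) := by
  constructor
  · intro hf a
    have hpos : (0:ℝ) < 1 + a ^ 2 := by positivity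
    have hx : (a₁ + a₂ * a ^ 2) / (1 + a ^ 2) ∈ Set.Icc a₁ a₂ := by
      constructor
      · rw [le_div_iff₀ hpos]; nlinarith [sq_nonneg a]
      · rw [div_le_iff₀ hpos]; nlinarith [sq_nonneg a]
    exact mul_nonneg (by positivity) (hf _ hx)
  · intro hf
    have hIco : ∀ x ∈ Set.Ico a₁ a₂, 0 ≤ f.eval x := by
      intro x hx
      obtain ⟨hx1, hx2⟩ := hx
      set t := Real.sqrt ((x - a₁) / (a₂ - x)) with ht
      have hden : (0:ℝ) < a₂ - x := by linarith
      have hargnn : (0:ℝ) ≤ (x - a₁) / (a₂ - x) := by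
        apply div_nonneg <;> linarith
      have ht2 : t ^ 2 = (x - a₁) / (a₂ - x) := Real.sq_sqrt hargnn
      have heq : (a₁ + a₂ * t ^ 2) / (1 + t ^ 2) = x := by
        have hne : (0:ℝ) < 1 + (x - a₁) / (a₂ - x) := by linarith
        rw [ht2, div_eq_iff hne.ne']
        field_simp
        ring
      have := hf t
      rw [heq] at this
      have hpos : (0:ℝ) < (1 + t ^ 2) ^ m := by positivity
      exact nonneg_of_mul_nonneg_right this hpos
    have hclosed : IsClosed {x : ℝ | 0 ≤ f.eval x} :=
      isClosed_le continuous_const f.continuous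
    intro a ha
    have hsub : Set.Icc a₁ a₂ ⊆ {x : ℝ | 0 ≤ f.eval x} := by
      rw [← closure_Ico h.ne]
      exact hclosed.closure_subset_iff.mpr hIco
    exact hsub ha
end
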